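/- arXiv:1608.03857 — 6 statements merged into one kernel-verified Lean document; each statement's English description precedes it below -/
import Mathlib

section
/- The function w ↦ w·exp(−Ein(w)) is strictly increasing on [0,∞) and converges to e^{−γ} as w → ∞, where Ein(w) = ∫₀^w (1−e^{−t})/t dt and γ is the Euler–Mascheroni constant. -/
open Real Filter

/-- The exponential integral `Ein w = ∫₀^w (1 - e^{-t})/t dt`. -/
noncomputable def Ein (w : ℝ) : ℝ := ∫ t in (0:ℝ)..w, (1 - Real.exp (-t)) / t

namespace EinAux

open MeasureTheory intervalIntegral Set

noncomputable def g (t : ℝ) : ℝ := (1 - Real.exp (-t)) / t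

noncomputable def h (t : ℝ) : ℝ := Real.log t * Real.exp (-t)

lemma g_nonneg {t : ℝ} (ht : 0 < t) : 0 ≤ g t := by
  apply div_nonneg _ ht.le
  have := Real.exp_le_one_iff.mpr (neg_nonpos.mpr ht.le)
  linarith

lemma g_le_one {t : ℝ} (ht : 0 < t) : g t ≤ 1 := by
  rw [g, div_le_one ht]
  have := Real.add_one_le_exp (-t)
  linarith

lemma g_meas : Measurable g :=
  ((measurable_const.sub ((Real.measurable_exp).comp measurable_neg))).div measurable_id

lemma g_intInt {a b : ℝ} (ha : 0 ≤ a) (hb : 0 ≤ b) :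
    IntervalIntegrable g volume a b := by
  rw [intervalIntegrable_iff, Set.uIoc]
  apply Measure.integrableOn_of_bounded measure_Ioc_lt_top.ne g_meas.aestronglyMeasurable
  rw [ae_restrict_iff' measurableSet_Ioc]
  refine ae_of_all _ fun t ht => ?_
  have ht0 : 0 < t := lt_of_le_of_lt (le_min ha hb) ht.1
  rw [Real.norm_eq_abs, abs_of_nonneg (g_nonneg ht0)]
  exact g_le_one ht0

lemma g_contAt {t : ℝ} (ht : t ≠ 0) : ContinuousAt g t :=
  ((continuous_const.sub (Real.continuous_exp.comp continuous_neg)).continuousAt).div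
    continuousAt_id ht

lemma Ein_hasDerivAt {w : ℝ} (hw : 0 < w) : HasDerivAt Ein (g w) w := by
  have : Ein = fun u => ∫ t in (0:ℝ)..u, g t := rfl
  rw [this]
  exact integral_hasDerivAt_right (g_intInt le_rfl hw.le)
    g_meas.stronglyMeasurable.stronglyMeasurableAtFilter (g_contAt hw.ne')

lemma abs_Ein_le {w : ℝ} (hw : 0 ≤ w) : |Ein w| ≤ w := by
  have := intervalIntegral.norm_integral_le_of_norm_le_const
    (C := 1) (f := g) (a := (0:ℝ)) (b := w) ?_
  · exact (by simpa [abs_of_nonneg hw] using this : |∫ x in (0:ℝ)..w, g x| ≤ w)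
  · intro t ht
    rw [Set.uIoc_of_le hw] at ht
    rw [Real.norm_eq_abs, abs_of_nonneg (g_nonneg ht.1)]
    exact g_le_one ht.1

lemma F_hasDerivAt {w : ℝ} (hw : 0 < w) :
    HasDerivAt (fun w : ℝ => w * Real.exp (-(Ein w)))
      (Real.exp (-(Ein w)) * Real.exp (-w)) w := by
  have h1 : HasDerivAt (fun w : ℝ => Real.exp (-(Ein w)))
      (Real.exp (-(Ein w)) * (-(g w))) w := by
    have := ((Ein_hasDerivAt hw).neg).exp
    simpa [mul_comm] using this
  have h2 : HasDerivAt (fun w : ℝ => w * Real.exp (-(Ein w)))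
      (1 * Real.exp (-(Ein w)) + w * (Real.exp (-(Ein w)) * (-(g w)))) w :=
    (hasDerivAt_id w).mul h1
  convert h2 using 1
  have hg : w * g w = 1 - Real.exp (-w) := by
    rw [g, mul_div_cancel₀ _ hw.ne']
  rw [show Real.exp (-w) = 1 - w * g w by rw [hg]; ring]
  ring

lemma strictMono : StrictMonoOn (fun w : ℝ => w * Real.exp (-(Ein w))) (Set.Ici (0:ℝ)) := by
  intro a ha b hb hab
  rcases eq_or_lt_of_le (Set.mem_Ici.mp ha) with h0 | h0
  · rw [← h0]
    have hb0 : 0 < b := lt_of_le_of_lt (le_of_eq h0) hab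
    simp only [zero_mul]
    exact mul_pos hb0 (Real.exp_pos _)
  · have key : StrictMonoOn (fun w : ℝ => w * Real.exp (-(Ein w))) (Set.Ici a) := by
      apply strictMonoOn_of_deriv_pos (convex_Ici a)
      · exact fun w hw => ((F_hasDerivAt (lt_of_lt_of_le h0 hw)).continuousAt).continuousWithinAt
      · intro w hw
        rw [interior_Ici] at hw
        rw [(F_hasDerivAt (h0.trans hw)).deriv]
        positivity
    exact key Set.self_mem_Ici (Set.mem_Ici.mpr hab.le) hab

lemma h_meas : Measurable h := Real.measurable_log.mul (Real.measurable_exp.comp measurable_neg)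

lemma int_Ioc_h : IntegrableOn h (Ioc (0:ℝ) 1) := by
  have hbound : IntegrableOn (fun t : ℝ => 2 * t ^ (-(1/2) : ℝ)) (Ioc (0:ℝ) 1) := by
    have := (intervalIntegral.intervalIntegrable_rpow' (a := 0) (b := 1)
      (r := -(1/2)) (by norm_num)).const_mul 2
    rwa [intervalIntegrable_iff_integrableOn_Ioc_of_le (by norm_num : (0:ℝ) ≤ 1)] at this
  apply Integrable.mono' hbound h_meas.aestronglyMeasurable
  rw [ae_restrict_iff' measurableSet_Ioc]
  refine ae_of_all _ fun t ht => ?_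
  have ht0 : 0 < t := ht.1
  have h1 : |Real.log t| = -Real.log t := abs_of_nonpos (Real.log_nonpos ht0.le ht.2)
  have h2 : -Real.log t ≤ 2 * t ^ (-(1/2) : ℝ) := by
    have hl : Real.log (t ^ (-(1/2) : ℝ)) ≤ t ^ (-(1/2) : ℝ) - 1 :=
      Real.log_le_sub_one_of_pos (Real.rpow_pos_of_pos ht0 _)
    rw [Real.log_rpow ht0] at hl
    nlinarith [Real.rpow_pos_of_pos ht0 (-(1/2) : ℝ)]
  calc ‖h t‖ = |Real.log t| * Real.exp (-t) := by
        rw [h, norm_mul, Real.norm_eq_abs, Real.norm_eq_abs, abs_of_pos (Real.exp_pos _)]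
    _ ≤ |Real.log t| * 1 := by
        apply mul_le_mul_of_nonneg_left _ (abs_nonneg _)
        exact Real.exp_le_one_iff.mpr (by linarith)
    _ ≤ 2 * t ^ (-(1/2) : ℝ) := by rw [mul_one, h1]; exact h2

lemma int_Ioi_h : IntegrableOn h (Ioi (1:ℝ)) := by
  have hbound : IntegrableOn (fun t : ℝ => t ^ (1:ℝ) * Real.exp (-t ^ (1:ℝ))) (Ioi (1:ℝ)) :=
    (integrableOn_rpow_mul_exp_neg_rpow (by norm_num) (by norm_num)).mono_set
      (Ioi_subset_Ioi (by norm_num))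
  apply Integrable.mono' hbound h_meas.aestronglyMeasurable
  rw [ae_restrict_iff' measurableSet_Ioi]
  refine ae_of_all _ fun t ht => ?_
  have ht1 : (1:ℝ) < t := ht
  have ht0 : (0:ℝ) < t := by linarith
  have hlog : 0 ≤ Real.log t := Real.log_nonneg ht1.le
  have hlt : Real.log t ≤ t := (Real.log_le_sub_one_of_pos ht0).trans (by linarith)
  rw [Real.rpow_one, Real.norm_eq_abs, h, abs_mul, abs_of_nonneg hlog,
    abs_of_pos (Real.exp_pos _)]
  exact mul_le_mul_of_nonneg_right hlt (Real.exp_pos _).le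

lemma int_Ioi_k : IntegrableOn (fun t : ℝ => Real.exp (-t) * t⁻¹) (Ioi (1:ℝ)) := by
  have hbound : IntegrableOn (fun t : ℝ => Real.exp (-(1:ℝ) * t)) (Ioi (1:ℝ)) :=
    exp_neg_integrableOn_Ioi 1 one_pos
  apply Integrable.mono' hbound
    ((Real.measurable_exp.comp measurable_neg).mul measurable_inv).aestronglyMeasurable
  rw [ae_restrict_iff' measurableSet_Ioi]
  refine ae_of_all _ fun t ht => ?_
  have ht1 : (1:ℝ) < t := ht
  simp only [Function.comp_apply, Pi.mul_apply, neg_one_mul, Real.norm_eq_abs, abs_mul]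
  rw [abs_of_pos (Real.exp_pos _), abs_of_pos (inv_pos.mpr (by linarith : (0:ℝ) < t))]
  have ht0 : (0:ℝ) < t := by linarith
  nlinarith [Real.exp_pos (-t), mul_inv_cancel₀ ht0.ne', inv_pos.mpr ht0]

lemma parts_Ioi : ∫ t in Ioi (1:ℝ), h t = ∫ t in Ioi (1:ℝ), Real.exp (-t) * t⁻¹ := by
  have hderiv : ∀ t ∈ Ioi (1:ℝ), HasDerivAt (fun t => -(Real.log t * Real.exp (-t)))
      (h t - Real.exp (-t) * t⁻¹) t := by
    intro t ht
    have ht0 : (0:ℝ) < t := lt_trans one_pos ht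
    have h1 : HasDerivAt (fun t : ℝ => Real.log t * Real.exp (-t))
        (t⁻¹ * Real.exp (-t) + Real.log t * (-Real.exp (-t))) t := by
      exact (Real.hasDerivAt_log ht0.ne').mul
        (((hasDerivAt_neg t).exp).congr_deriv (by ring))
    have : HasDerivAt (fun t => -(Real.log t * Real.exp (-t)))
        (-(t⁻¹ * Real.exp (-t) + Real.log t * (-Real.exp (-t)))) t := h1.neg
    convert this using 1
    rw [h]; ring
  have hint : IntegrableOn (fun t => h t - Real.exp (-t) * t⁻¹) (Ioi (1:ℝ)) :=
    int_Ioi_h.sub int_Ioi_k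
  have htend : Tendsto (fun t => -(Real.log t * Real.exp (-t))) atTop (nhds 0) := by
    have hbig : Tendsto (fun t : ℝ => t ^ (1:ℝ) * Real.exp (-1 * t)) atTop (nhds 0) :=
      tendsto_rpow_mul_exp_neg_mul_atTop_nhds_zero 1 1 one_pos
    rw [show (0:ℝ) = -0 by ring]
    apply Tendsto.neg
    apply squeeze_zero_norm' _ (by simpa using hbig)
    filter_upwards [eventually_ge_atTop (1:ℝ)] with t ht
    have ht0 : (0:ℝ) < t := lt_of_lt_of_le one_pos ht
    rw [Real.norm_eq_abs, abs_mul, abs_of_nonneg (Real.log_nonneg ht),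
      abs_of_pos (Real.exp_pos _)]
    exact mul_le_mul_of_nonneg_right
      ((Real.log_le_sub_one_of_pos ht0).trans (by linarith)) (Real.exp_pos _).le
  have := integral_Ioi_of_hasDerivAt_of_tendsto
    (f := fun t => -(Real.log t * Real.exp (-t)))
    (a := 1) (m := 0) ?_ hderiv hint htend
  · rw [integral_sub int_Ioi_h int_Ioi_k] at this
    simp only [Real.log_one, zero_mul, neg_zero, sub_zero] at this
    linarith
  · apply ContinuousAt.continuousWithinAt
    exact (((Real.continuousAt_log one_ne_zero).mul
      ((Real.continuous_exp.comp continuous_neg).continuousAt))).neg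

lemma int_Ioc_eq : ∫ t in Ioc (0:ℝ) 1, h t = -Ein 1 := by
  have hne : (nhdsWithin (0:ℝ) (Ioo 0 1)).NeBot := by
    apply mem_closure_iff_nhdsWithin_neBot.mp
    rw [closure_Ioo (by norm_num : (0:ℝ) ≠ 1)]
    exact ⟨le_rfl, by norm_num⟩
  have hint01 : IntegrableOn h (uIcc (0:ℝ) 1) := by
    rw [uIcc_of_le (by norm_num : (0:ℝ) ≤ 1), integrableOn_Icc_iff_integrableOn_Ioc]
    exact int_Ioc_h
  have hsub : Ioo (0:ℝ) 1 ⊆ uIcc (0:ℝ) 1 := by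
    rw [uIcc_of_le (by norm_num : (0:ℝ) ≤ 1)]
    exact Ioo_subset_Icc_self
  have hL : Tendsto (fun x : ℝ => ∫ t in x..(1:ℝ), h t) (nhdsWithin 0 (Ioo 0 1))
      (nhds (∫ t in Ioc (0:ℝ) 1, h t)) := by
    have hc := (intervalIntegral.continuousOn_primitive_interval_left hint01) 0 left_mem_uIcc
    have := hc.mono hsub
    rw [ContinuousWithinAt] at this
    rwa [intervalIntegral.integral_of_le (by norm_num : (0:ℝ) ≤ 1)] at this
  have hformula : ∀ ε ∈ Ioo (0:ℝ) 1, (∫ t in ε..(1:ℝ), h t)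
      = -((1 - Real.exp (-ε)) * Real.log ε) - (Ein 1 - Ein ε) := by
    intro ε hε
    have hε0 : 0 < ε := hε.1
    have hε1 : ε ≤ 1 := hε.2.le
    have hderiv : ∀ t ∈ uIcc ε 1, HasDerivAt (fun t => (1 - Real.exp (-t)) * Real.log t)
        (h t + g t) t := by
      intro t ht
      rw [uIcc_of_le hε1] at ht
      have ht0 : 0 < t := lt_of_lt_of_le hε0 ht.1
      have h1 : HasDerivAt (fun t : ℝ => 1 - Real.exp (-t)) (Real.exp (-t)) t := by
        simpa using ((hasDerivAt_neg t).exp.const_sub 1)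
      have : HasDerivAt (fun t => (1 - Real.exp (-t)) * Real.log t)
          (Real.exp (-t) * Real.log t + (1 - Real.exp (-t)) * t⁻¹) t :=
        h1.mul (Real.hasDerivAt_log ht0.ne')
      convert this using 1
      rw [h, g, div_eq_mul_inv]; ring
    have hcontc : ContinuousOn (fun t => h t + g t) (uIcc ε 1) := by
      rw [uIcc_of_le hε1]
      intro t ht
      have ht0 : 0 < t := lt_of_lt_of_le hε0 ht.1
      exact (((Real.continuousAt_log ht0.ne').mul
        ((Real.continuous_exp.comp continuous_neg).continuousAt)).add
        (g_contAt ht0.ne')).continuousWithinAt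
    have hcontH : ContinuousOn h (uIcc ε 1) := by
      rw [uIcc_of_le hε1]
      intro t ht
      have ht0 : 0 < t := lt_of_lt_of_le hε0 ht.1
      exact ((Real.continuousAt_log ht0.ne').mul
        ((Real.continuous_exp.comp continuous_neg).continuousAt)).continuousWithinAt
    have hii : IntervalIntegrable (fun t => h t + g t) volume ε 1 :=
      hcontc.intervalIntegrable
    have key := intervalIntegral.integral_eq_sub_of_hasDerivAt hderiv hii
    have hih : IntervalIntegrable h volume ε 1 := hcontH.intervalIntegrable
    have hig : IntervalIntegrable g volume ε 1 := g_intInt hε0.le (by norm_num)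
    rw [intervalIntegral.integral_add hih hig] at key
    have hEin : (∫ t in ε..(1:ℝ), g t) = Ein 1 - Ein ε := by
      have hadj := intervalIntegral.integral_add_adjacent_intervals
        (g_intInt le_rfl hε0.le) hig
      have e1 : Ein ε = ∫ t in (0:ℝ)..ε, g t := rfl
      have e2 : Ein 1 = ∫ t in (0:ℝ)..(1:ℝ), g t := rfl
      rw [e1, e2, ← hadj]; ring
    have : ((1:ℝ) - Real.exp (-1)) * Real.log 1 = 0 := by simp
    rw [this] at key
    linarith [key, hEin]
  have hR : Tendsto (fun ε : ℝ => -((1 - Real.exp (-ε)) * Real.log ε) - (Ein 1 - Ein ε))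
      (nhdsWithin 0 (Ioo 0 1)) (nhds (-Ein 1)) := by
    have t1 : Tendsto (fun ε : ℝ => (1 - Real.exp (-ε)) * Real.log ε)
        (nhdsWithin 0 (Ioo 0 1)) (nhds 0) := by
      have hb : Tendsto (fun ε : ℝ => |Real.log ε * ε ^ (1:ℝ)|)
          (nhdsWithin 0 (Ioo 0 1)) (nhds 0) := by
        have := (tendsto_log_mul_rpow_nhdsGT_zero one_pos).mono_left
          (nhdsWithin_mono 0 (Ioo_subset_Ioi_self : Ioo (0:ℝ) 1 ⊆ Ioi 0))
        simpa using this.abs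
      apply squeeze_zero_norm' _ hb
      filter_upwards [self_mem_nhdsWithin] with ε hε
      have hε0 : 0 < ε := hε.1
      have h1 : 0 ≤ 1 - Real.exp (-ε) := by
        have := Real.exp_le_one_iff.mpr (neg_nonpos.mpr hε0.le); linarith
      have h2 : 1 - Real.exp (-ε) ≤ ε := by
        have := Real.add_one_le_exp (-ε); linarith
      rw [Real.norm_eq_abs, abs_mul, abs_of_nonneg h1, abs_mul, Real.rpow_one,
        abs_of_pos hε0, mul_comm |Real.log ε| ε]
      exact mul_le_mul_of_nonneg_right h2 (abs_nonneg _)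
    have t2 : Tendsto (fun ε : ℝ => Ein ε) (nhdsWithin 0 (Ioo 0 1)) (nhds 0) := by
      have hb : Tendsto (fun ε : ℝ => ε) (nhdsWithin (0:ℝ) (Ioo 0 1)) (nhds 0) :=
        tendsto_id.mono_left nhdsWithin_le_nhds
      apply squeeze_zero_norm' _ hb
      filter_upwards [self_mem_nhdsWithin] with ε hε
      exact abs_Ein_le hε.1.le
    simpa using (t1.neg.sub (tendsto_const_nhds.sub t2))
  have heq : (fun x : ℝ => ∫ t in x..(1:ℝ), h t) =ᶠ[nhdsWithin (0:ℝ) (Ioo 0 1)]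
      (fun ε : ℝ => -((1 - Real.exp (-ε)) * Real.log ε) - (Ein 1 - Ein ε)) := by
    filter_upwards [self_mem_nhdsWithin] with ε hε using hformula ε hε
  exact tendsto_nhds_unique (Filter.Tendsto.congr' heq hL) hR

lemma gamma_eq : Real.eulerMascheroniConstant
    = Ein 1 - ∫ t in Ioi (1:ℝ), Real.exp (-t) * t⁻¹ := by
  set J : ℝ := ∫ t in Ioi (0:ℝ), Real.log t * Real.exp (-t) with hJ
  have hgamma : Real.eulerMascheroniConstant = -J := by
    have h1 : HasDerivAt Complex.GammaIntegral
        (∫ t : ℝ in Ioi 0, (t : ℂ) ^ ((1:ℂ) - 1) * (Real.log t * Real.exp (-t))) 1 :=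
      Complex.hasDerivAt_GammaIntegral (by norm_num)
    have h2 : (∫ t : ℝ in Ioi 0, (t : ℂ) ^ ((1:ℂ) - 1) * (Real.log t * Real.exp (-t)))
        = (J : ℂ) := by
      rw [show ((1:ℂ) - 1) = 0 by ring]
      simp_rw [Complex.cpow_zero, one_mul]
      rw [hJ]
      simp_rw [← Complex.ofReal_mul]
      exact integral_ofReal (𝕜 := ℂ) (f := fun t => Real.log t * Real.exp (-t))
    rw [h2] at h1
    have hev : Complex.Gamma =ᶠ[nhds (1:ℂ)] Complex.GammaIntegral := by
      have hopen : IsOpen {s : ℂ | 0 < s.re} := isOpen_lt continuous_const Complex.continuous_re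
      filter_upwards [hopen.mem_nhds (by norm_num : (0:ℝ) < (1:ℂ).re)] with s hs
      exact Complex.Gamma_eq_integral hs
    have h3 : HasDerivAt Complex.Gamma (J : ℂ) 1 := h1.congr_of_eventuallyEq hev
    have h4 : HasDerivAt (fun x : ℝ => (Complex.Gamma (x : ℂ)).re) ((J:ℂ)).re 1 :=
      HasDerivAt.real_of_complex (by exact_mod_cast h3)
    have h5 : HasDerivAt Real.Gamma J 1 := by
      have heq : (fun x : ℝ => (Complex.Gamma (x : ℂ)).re) = Real.Gamma := by
        funext x; rw [Complex.Gamma_ofReal, Complex.ofReal_re]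
      rwa [heq, Complex.ofReal_re] at h4
    have := h5.unique Real.hasDerivAt_Gamma_one
    linarith
  have hsplit : J = (∫ t in Ioc (0:ℝ) 1, h t) + ∫ t in Ioi (1:ℝ), h t := by
    rw [hJ, ← Ioc_union_Ioi_eq_Ioi (by norm_num : (0:ℝ) ≤ 1)]
    exact setIntegral_union (Ioc_disjoint_Ioi le_rfl) measurableSet_Ioi int_Ioc_h int_Ioi_h
  rw [hgamma, hsplit, int_Ioc_eq, parts_Ioi]
  ring

lemma tendsto_F : Tendsto (fun w : ℝ => w * Real.exp (-(Ein w))) atTop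
    (nhds (Real.exp (-Real.eulerMascheroniConstant))) := by
  set I : ℝ := ∫ t in Ioi (1:ℝ), Real.exp (-t) * t⁻¹ with hI
  have h1 : Tendsto (fun w : ℝ => ∫ t in (1:ℝ)..w, Real.exp (-t) * t⁻¹) atTop (nhds I) :=
    intervalIntegral_tendsto_integral_Ioi 1 int_Ioi_k tendsto_id
  have h2 : Tendsto (fun w : ℝ => Real.exp (-(Ein 1) + ∫ t in (1:ℝ)..w, Real.exp (-t) * t⁻¹))
      atTop (nhds (Real.exp (-(Ein 1) + I))) :=
    (Real.continuous_exp.tendsto _).comp (h1.const_add _)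
  have hconst : -(Ein 1) + I = -Real.eulerMascheroniConstant := by
    rw [gamma_eq, ← hI]; ring
  rw [hconst] at h2
  apply Filter.Tendsto.congr' _ h2
  filter_upwards [eventually_ge_atTop (1:ℝ)] with w hw
  have hw0 : (0:ℝ) < w := lt_of_lt_of_le one_pos hw
  have hcontk : ContinuousOn (fun t : ℝ => Real.exp (-t) * t⁻¹) (uIcc (1:ℝ) w) := by
    rw [uIcc_of_le hw]
    intro t ht
    have ht0 : 0 < t := lt_of_lt_of_le one_pos ht.1
    exact (((Real.continuous_exp.comp continuous_neg).continuousAt).mul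
      (continuousAt_inv₀ ht0.ne')).continuousWithinAt
  have hcontinv : ContinuousOn (fun t : ℝ => t⁻¹) (uIcc (1:ℝ) w) := by
    rw [uIcc_of_le hw]
    intro t ht
    have ht0 : 0 < t := lt_of_lt_of_le one_pos ht.1
    exact (continuousAt_inv₀ ht0.ne').continuousWithinAt
  have hig : IntervalIntegrable g volume 1 w := g_intInt (by norm_num) hw0.le
  have hsplit : (∫ t in (1:ℝ)..w, Real.exp (-t) * t⁻¹)
      = (∫ t in (1:ℝ)..w, t⁻¹) - ∫ t in (1:ℝ)..w, g t := by
    rw [← intervalIntegral.integral_sub hcontinv.intervalIntegrable hig]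
    apply intervalIntegral.integral_congr
    intro t ht
    rw [uIcc_of_le hw] at ht
    have ht0 : 0 < t := lt_of_lt_of_le one_pos ht.1
    simp only [g, div_eq_mul_inv]
    ring
  have hinv_eval : (∫ t in (1:ℝ)..w, t⁻¹) = Real.log w := by
    rw [integral_inv (by rw [uIcc_of_le hw]; intro hmem; exact absurd hmem.1 (by norm_num))]
    simp
  have hEinw : (∫ t in (1:ℝ)..w, g t) = Ein w - Ein 1 := by
    have hadj := intervalIntegral.integral_add_adjacent_intervals
      (g_intInt le_rfl (by norm_num : (0:ℝ) ≤ 1)) hig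
    have e1 : Ein 1 = ∫ t in (0:ℝ)..(1:ℝ), g t := rfl
    have e2 : Ein w = ∫ t in (0:ℝ)..w, g t := rfl
    rw [e1, e2, ← hadj]; ring
  rw [hsplit, hinv_eval, hEinw,
    show -(Ein 1) + (Real.log w - (Ein w - Ein 1)) = Real.log w + -(Ein w) by ring,
    Real.exp_add, Real.exp_log hw0]

end EinAux

/-- The function `w ↦ w·exp(−Ein(w))` is strictly increasing on `[0,∞)` and converges to
`e^{−γ}` as `w → ∞`, where `γ` is the Euler–Mascheroni constant. -/
theorem stmt0 :
    StrictMonoOn (fun w : ℝ => w * Real.exp (-(Ein w))) (Set.Ici (0:ℝ)) ∧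
    Tendsto (fun w : ℝ => w * Real.exp (-(Ein w))) atTop
      (nhds (Real.exp (-Real.eulerMascheroniConstant))) :=
  ⟨EinAux.strictMono, EinAux.tendsto_F⟩
end

section
/- Let α : [0, e^{−γ}) → [0,∞) be defined by the equation α(η)·exp(−Ein(α(η))) = η (this is well-defined since w·e^{−Ein(w)} is strictly increasing from 0 to e^{−γ}). Then for all 0 ≤ w ≤ 0.2, w ≤ α(w) ≤ w + 2w². -/
open Real MeasureTheory intervalIntegral

lemma g_nonneg {t : ℝ} (ht : 0 ≤ t) : 0 ≤ (1 - Real.exp (-t)) / t := by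
  apply div_nonneg _ ht
  have : Real.exp (-t) ≤ 1 := Real.exp_le_one_iff.mpr (by linarith)
  linarith

lemma g_le_one {t : ℝ} (ht : 0 ≤ t) : (1 - Real.exp (-t)) / t ≤ 1 := by
  rcases eq_or_lt_of_le ht with h | h
  · simp [← h]
  · rw [div_le_one h]
    have := Real.add_one_le_exp (-t)
    linarith

lemma g_intervalIntegrable {a b : ℝ} (ha : 0 ≤ a) (hb : a ≤ b) :
    IntervalIntegrable (fun t => (1 - Real.exp (-t)) / t) volume a b := by
  rw [intervalIntegrable_iff_integrableOn_Ioc_of_le hb]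
  apply MeasureTheory.Integrable.mono' ((integrableOn_const_iff (C := (1:ℝ))).mpr (Or.inr measure_Ioc_lt_top))
  · apply Measurable.aestronglyMeasurable
    exact ((measurable_const.sub ((Real.measurable_exp).comp measurable_neg))).div measurable_id
  · filter_upwards [MeasureTheory.ae_restrict_mem measurableSet_Ioc] with t ht
    have ht0 : (0:ℝ) ≤ t := le_of_lt (lt_of_le_of_lt ha ht.1)
    rw [Real.norm_eq_abs, abs_of_nonneg (g_nonneg ht0)]
    exact g_le_one ht0

lemma Ein_nonneg {a : ℝ} (ha : 0 ≤ a) : 0 ≤ Ein a :=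
  intervalIntegral.integral_nonneg ha (fun t ht => g_nonneg ht.1)

lemma Ein_le {a : ℝ} (ha : 0 ≤ a) : Ein a ≤ a := by
  have : Ein a ≤ ∫ _ in (0:ℝ)..a, (1:ℝ) := by
    apply intervalIntegral.integral_mono_on ha (g_intervalIntegrable le_rfl ha)
      intervalIntegrable_const
    exact fun t ht => g_le_one ht.1
  simpa using this

lemma Ein_le_one_add_log {a : ℝ} (ha : 1 ≤ a) : Ein a ≤ 1 + Real.log a := by
  have h01 : IntervalIntegrable (fun t => (1 - Real.exp (-t)) / t) volume 0 1 :=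
    g_intervalIntegrable le_rfl zero_le_one
  have h1a : IntervalIntegrable (fun t => (1 - Real.exp (-t)) / t) volume 1 a :=
    g_intervalIntegrable zero_le_one ha
  have hsplit : Ein a = (∫ t in (0:ℝ)..1, (1 - Real.exp (-t)) / t)
      + ∫ t in (1:ℝ)..a, (1 - Real.exp (-t)) / t :=
    (intervalIntegral.integral_add_adjacent_intervals h01 h1a).symm
  have hfirst : (∫ t in (0:ℝ)..1, (1 - Real.exp (-t)) / t) ≤ 1 := by
    have := Ein_le (a := 1) zero_le_one
    simpa [Ein] using this
  have hinv : IntervalIntegrable (fun t : ℝ => 1 / t) volume 1 a := by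
    apply ContinuousOn.intervalIntegrable
    apply ContinuousOn.div continuousOn_const continuousOn_id
    intro x hx
    rw [Set.uIcc_of_le ha] at hx
    exact ne_of_gt (lt_of_lt_of_le zero_lt_one hx.1)
  have hsecond : (∫ t in (1:ℝ)..a, (1 - Real.exp (-t)) / t) ≤ ∫ t in (1:ℝ)..a, 1 / t := by
    apply intervalIntegral.integral_mono_on ha h1a hinv
    intro t ht
    have ht0 : (0:ℝ) < t := lt_of_lt_of_le zero_lt_one ht.1
    have he : 0 < Real.exp (-t) := Real.exp_pos _
    gcongr
    linarith
  calc Ein a = _ := hsplit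
    _ ≤ 1 + ∫ t in (1:ℝ)..a, 1 / t := by linarith
    _ = 1 + Real.log a := by
        rw [integral_one_div (by intro h; rw [Set.uIcc_of_le ha] at h; linarith [h.1])]
        simp

/-- Let `α : [0, e^{−γ}) → [0,∞)` be defined by `α(η)·exp(−Ein(α(η))) = η`.  Then for all
`0 ≤ w ≤ 0.2` one has `w ≤ α(w) ≤ w + 2w²`. -/
theorem stmt3 (α : ℝ → ℝ)
    (hα : ∀ η : ℝ, 0 ≤ η → η < Real.exp (-Real.eulerMascheroniConstant) →
      0 ≤ α η ∧ α η * Real.exp (-(Ein (α η))) = η)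
    (w : ℝ) (hw0 : 0 ≤ w) (hw1 : w ≤ 0.2) :
    w ≤ α w ∧ α w ≤ w + 2 * w ^ 2 := by
  have hγ : (0.2:ℝ) < Real.exp (-Real.eulerMascheroniConstant) := by
    have h1 : Real.eulerMascheroniConstant < 2/3 := Real.eulerMascheroniConstant_lt_two_thirds
    have h2 : (1:ℝ) - 2/3 ≤ Real.exp (-(2/3)) := by linarith [Real.add_one_le_exp (-(2/3:ℝ))]
    have h3 : Real.exp (-(2/3:ℝ)) ≤ Real.exp (-Real.eulerMascheroniConstant) :=
      Real.exp_le_exp.mpr (by linarith)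
    linarith
  obtain ⟨ha0, heq⟩ := hα w hw0 (lt_of_le_of_lt hw1 hγ)
  set a := α w with hadef
  have hE0 : 0 ≤ Ein a := Ein_nonneg ha0
  have hEa : Ein a ≤ a := Ein_le ha0
  have hlow : w ≤ a := by
    rw [← heq]
    have h1 : Real.exp (-(Ein a)) ≤ 1 := Real.exp_le_one_iff.mpr (by linarith)
    nlinarith
  have hexp1 : Real.exp (-1 : ℝ) > 0.2 := by
    have h := Real.exp_one_lt_d9
    have h5 : Real.exp (1:ℝ) < 5 := by linarith
    have hp : (0:ℝ) < Real.exp (1:ℝ) := Real.exp_pos _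
    rw [Real.exp_neg]
    rw [gt_iff_lt, lt_inv_comm₀] <;> nlinarith
  have ha1 : a < 1 := by
    by_contra h
    push_neg at h
    have hpos : 0 < a := lt_of_lt_of_le zero_lt_one h
    have hlog : Ein a ≤ 1 + Real.log a := Ein_le_one_add_log h
    have hmono : Real.exp (-(1 + Real.log a)) ≤ Real.exp (-(Ein a)) :=
      Real.exp_le_exp.mpr (by linarith)
    have hval : Real.exp (-(1 + Real.log a)) = Real.exp (-1) / a := by
      rw [neg_add, Real.exp_add, Real.exp_neg (Real.log a), Real.exp_log hpos]
      ring
    have hge : Real.exp (-1 : ℝ) ≤ w := by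
      rw [← heq]
      calc Real.exp (-1:ℝ) = a * (Real.exp (-1) / a) := by field_simp
        _ ≤ a * Real.exp (-(Ein a)) := by
            apply mul_le_mul_of_nonneg_left _ (le_of_lt hpos)
            rw [← hval]; exact hmono
    linarith
  have ha29 : a ≤ 0.29 := by
    by_contra h
    push_neg at h
    have hq : (1 - a/2)^2 ≤ Real.exp (-a) := by
      have h1 := Real.add_one_le_exp (-(a/2))
      have h2 : Real.exp (-(a/2)) * Real.exp (-(a/2)) = Real.exp (-a) := by
        rw [← Real.exp_add]; ring_nf
      nlinarith [Real.exp_pos (-(a/2))]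
    have hmono : Real.exp (-a) ≤ Real.exp (-(Ein a)) := Real.exp_le_exp.mpr (by linarith)
    have hwge : a * (1 - a/2)^2 ≤ w := by
      rw [← heq]
      nlinarith
    nlinarith [sq_nonneg (a - 2/3), sq_nonneg (a - 0.29)]
  have hu : 1 - a ≤ Real.exp (-(Ein a)) := by
    have h1 : Real.exp (-a) ≤ Real.exp (-(Ein a)) := Real.exp_le_exp.mpr (by linarith)
    linarith [Real.add_one_le_exp (-a)]
  have hup : a ≤ w + 2 * w ^ 2 := by
    rw [← heq]
    set u := Real.exp (-(Ein a)) with hudef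
    have hu2 : 0 ≤ 2*u^2 - 1 := by nlinarith
    have hkey : 1 ≤ u + 2*a*u^2 := by nlinarith [mul_nonneg ha0 hu2]
    nlinarith [mul_le_mul_of_nonneg_left hkey ha0]
  exact ⟨hlow, hup⟩
end

section
/- The inverse function α of w ↦ w·e^{−Ein(w)} satisfies α'(η) = exp(α(η) + Ein(α(η))) for η ∈ (0, e^{−γ}), and α is a convex, strictly increasing function on [0, e^{−γ}) with α(0) = 0 and α(η) → ∞ as η → e^{−γ}. -/
open Real Filter

open MeasureTheory intervalIntegral Topology

noncomputable def phi (t : ℝ) : ℝ := if t = 0 then 1 else (1 - Real.exp (-t)) / t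

lemma phi_of_ne {t : ℝ} (ht : t ≠ 0) : phi t = (1 - Real.exp (-t)) / t := if_neg ht

lemma continuous_phi : Continuous phi := by
  rw [continuous_iff_continuousAt]
  intro x
  rcases eq_or_ne x 0 with rfl | hx
  · have hd : HasDerivAt (fun t : ℝ => 1 - Real.exp (-t)) 1 0 := by
      have : HasDerivAt (fun t : ℝ => Real.exp (-t)) (-1) 0 := by
        simpa using ((hasDerivAt_id (0:ℝ)).neg).exp
      exact ((hasDerivAt_const (0:ℝ) (1:ℝ)).sub this).congr_deriv (by norm_num)
    have hs := hasDerivAt_iff_tendsto_slope.1 hd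
    have : Tendsto phi (𝓝[≠] (0:ℝ)) (𝓝 1) := by
      refine hs.congr' ?_
      filter_upwards [self_mem_nhdsWithin] with t ht
      simp [slope, phi_of_ne ht, div_eq_inv_mul]
    unfold ContinuousAt
    rw [show phi 0 = 1 from if_pos rfl, ← nhdsNE_sup_pure (0:ℝ),
      tendsto_sup]
    exact ⟨this, by simpa [show phi 0 = 1 from if_pos rfl] using tendsto_pure_nhds phi 0⟩
  · have : ContinuousAt (fun t : ℝ => (1 - Real.exp (-t)) / t) x :=
      ContinuousAt.div (by fun_prop) continuousAt_id hx
    refine this.congr ?_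
    filter_upwards [isOpen_ne.eventually_mem hx] with t ht
    simp [phi_of_ne ht]

lemma Ein_eq (w : ℝ) : Ein w = ∫ t in (0:ℝ)..w, phi t := by
  refine intervalIntegral.integral_congr_ae ?_
  have h0 : (volume : Measure ℝ) {0} = 0 := measure_singleton 0
  filter_upwards [measure_eq_zero_iff_ae_notMem.1 h0] with t ht _
  exact (phi_of_ne ht).symm

lemma Ein_fun_eq : Ein = fun w => ∫ t in (0:ℝ)..w, phi t := funext Ein_eq

lemma hasDerivAt_Ein (w : ℝ) : HasDerivAt Ein (phi w) w := by
  rw [Ein_fun_eq]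
  exact (continuous_phi.integral_hasStrictDerivAt 0 w).hasDerivAt

lemma phi_nonneg (t : ℝ) : 0 ≤ phi t := by
  rcases lt_trichotomy t 0 with ht | rfl | ht
  · rw [phi_of_ne ht.ne]
    exact div_nonneg_iff.2 (Or.inr ⟨by simpa using Real.one_le_exp (by linarith : (0:ℝ) ≤ -t), ht.le⟩)
  · simp [phi]
  · rw [phi_of_ne ht.ne']
    apply div_nonneg _ ht.le
    simpa using Real.exp_le_one_iff.2 (by linarith : -t ≤ 0)

lemma mul_phi (t : ℝ) : t * phi t = 1 - Real.exp (-t) := by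
  rcases eq_or_ne t 0 with rfl | ht
  · simp
  · rw [phi_of_ne ht, mul_div_cancel₀ _ ht]

lemma Ein_zero : Ein 0 = 0 := by simp [Ein]

lemma Ein_monotone : Monotone Ein := by
  have hd : ∀ w, HasDerivAt Ein (phi w) w := hasDerivAt_Ein
  apply monotone_of_deriv_nonneg (fun w => (hd w).differentiableAt)
  intro w
  rw [(hd w).deriv]
  exact phi_nonneg w
noncomputable def fio (w : ℝ) : ℝ := w * Real.exp (-(Ein w))

lemma hasDerivAt_fio (w : ℝ) :
    HasDerivAt fio (Real.exp (-(Ein w)) * Real.exp (-w)) w := by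
  have h1 : HasDerivAt (fun w => Real.exp (-(Ein w))) (Real.exp (-(Ein w)) * -(phi w)) w :=
    ((hasDerivAt_Ein w).neg).exp
  have h2 := (hasDerivAt_id w).mul h1
  have h2' : HasDerivAt fio (1 * Real.exp (-(Ein w)) + w * (Real.exp (-(Ein w)) * -(phi w))) w := h2
  convert h2' using 1
  have := mul_phi w
  nlinarith [Real.exp_pos (-(Ein w))]

lemma fio_strictMono : StrictMono fio := by
  apply strictMono_of_deriv_pos
  intro w
  rw [(hasDerivAt_fio w).deriv]
  positivity
noncomputable def psi (n : ℕ) (t : ℝ) : ℝ := (∑ j ∈ Finset.range n, (1 - t / n) ^ j) / n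

lemma continuous_psi (n : ℕ) : Continuous (psi n) := by
  unfold psi; fun_prop

lemma ein_integral_pow (n : ℕ) (hn : 1 ≤ n) (j : ℕ) :
    ∫ t in (0:ℝ)..n, (1 - t / n) ^ j = n / (j + 1) := by
  have hn' : (n : ℝ) ≠ 0 := Nat.cast_ne_zero.2 (by omega)
  have key : ∀ t : ℝ, HasDerivAt (fun t : ℝ => -((n : ℝ) / (j + 1)) * (1 - t / n) ^ (j + 1))
      ((1 - t / n) ^ j) t := by
    intro t
    have h1 : HasDerivAt (fun t : ℝ => 1 - t / n) (-(1 / n)) t := by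
      simpa using ((hasDerivAt_id t).div_const (n : ℝ)).const_sub 1
    have h2 := (h1.pow (j + 1)).const_mul (-((n : ℝ) / (j + 1)))
    refine h2.congr_deriv ?_
    have hj : ((j : ℝ) + 1) ≠ 0 := by positivity
    push_cast
    field_simp
  rw [intervalIntegral.integral_eq_sub_of_hasDerivAt (fun t _ => key t)
    ((Continuous.pow (by fun_prop) j).intervalIntegrable _ _)]
  rw [div_self hn']
  simp

lemma integral_psi (n : ℕ) (hn : 1 ≤ n) :
    ∫ t in (0:ℝ)..n, psi n t = (harmonic n : ℝ) := by
  have hn' : (n : ℝ) ≠ 0 := Nat.cast_ne_zero.2 (by omega)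
  unfold psi
  rw [intervalIntegral.integral_div, intervalIntegral.integral_finset_sum (f := fun j (t : ℝ) => (1 - t / (n:ℝ)) ^ j)
    (fun j _ => (Continuous.pow (by fun_prop) j).intervalIntegrable _ _)]
  rw [Finset.sum_congr rfl (fun j _ => ein_integral_pow n hn j), Finset.sum_div]
  rw [harmonic]
  push_cast
  refine Finset.sum_congr rfl fun j _ => ?_
  rw [div_right_comm, div_self hn', one_div]
lemma psi_eq {n : ℕ} (hn : 1 ≤ n) {t : ℝ} (ht : t ≠ 0) :
    psi n t = (1 - (1 - t / n) ^ n) / t := by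
  have hn' : (n : ℝ) ≠ 0 := Nat.cast_ne_zero.2 (by omega)
  have hx : (1 : ℝ) - t / n ≠ 1 := by
    simp only [ne_eq, sub_eq_self]
    exact div_ne_zero ht hn'
  rw [psi, geom_sum_eq hx]
  rw [show (1:ℝ) - t / n - 1 = -(t / n) by ring]
  field_simp
  ring

lemma pow_le_exp {n : ℕ} (hn : 1 ≤ n) {t : ℝ} (h0 : 0 ≤ t) (h1 : t ≤ n) :
    (1 - t / n) ^ n ≤ Real.exp (-t) := by
  have hn' : (0 : ℝ) < n := by exact_mod_cast (by omega : 0 < n)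
  have hb0 : (0 : ℝ) ≤ 1 - t / n := by
    rw [sub_nonneg, div_le_one hn']; exact h1
  have hb : (1 : ℝ) - t / n ≤ Real.exp (-(t / n)) := by
    have := Real.add_one_le_exp (-(t / n)); linarith
  calc (1 - t / n) ^ n ≤ Real.exp (-(t / n)) ^ n := pow_le_pow_left₀ hb0 hb n
    _ = Real.exp (-t) := by
        rw [← Real.exp_nat_mul]
        congr 1
        field_simp
lemma exp_sub_pow_le {n : ℕ} (hn : 1 ≤ n) {t : ℝ} (h0 : 0 ≤ t) (h1 : t ≤ n) :
    Real.exp (-t) - (1 - t / n) ^ n ≤ Real.exp (-t) * t ^ 2 / n := by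
  have hn' : (0 : ℝ) < n := by exact_mod_cast (by omega : 0 < n)
  set c : ℝ := t / n with hc
  have hc0 : 0 ≤ c := div_nonneg h0 hn'.le
  have hc1 : c ≤ 1 := by rw [hc, div_le_one hn']; exact h1
  have e1 : 1 - c ^ 2 ≤ Real.exp c * (1 - c) := by
    nlinarith [Real.add_one_le_exp c]
  have e2 : (1 - c ^ 2) ^ n ≤ (Real.exp c * (1 - c)) ^ n :=
    pow_le_pow_left₀ (by nlinarith) e1 n
  have e3 : 1 - (n : ℝ) * c ^ 2 ≤ (1 - c ^ 2) ^ n := by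
    have := one_add_mul_le_pow (a := -c ^ 2) (by nlinarith) n
    calc 1 - (n : ℝ) * c ^ 2 = 1 + n * (-c ^ 2) := by ring
      _ ≤ (1 + -c ^ 2) ^ n := this
      _ = (1 - c ^ 2) ^ n := by ring_nf
  have e4 : (Real.exp c * (1 - c)) ^ n = Real.exp t * (1 - c) ^ n := by
    rw [mul_pow, ← Real.exp_nat_mul]
    congr 2
    rw [hc]; field_simp
  have e5 : 1 - t ^ 2 / n ≤ Real.exp t * (1 - c) ^ n := by
    have hnc : (n : ℝ) * c ^ 2 = t ^ 2 / n := by rw [hc]; field_simp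
    calc 1 - t ^ 2 / n = 1 - (n : ℝ) * c ^ 2 := by rw [hnc]
      _ ≤ (1 - c ^ 2) ^ n := e3
      _ ≤ (Real.exp c * (1 - c)) ^ n := e2
      _ = Real.exp t * (1 - c) ^ n := e4
  have hexp : 0 < Real.exp t := Real.exp_pos t
  have h6 : Real.exp (-t) * (1 - t ^ 2 / n) ≤ (1 - c) ^ n := by
    rw [Real.exp_neg]
    rw [inv_mul_le_iff₀ hexp]
    linarith [e5]
  have expand : Real.exp (-t) * (1 - t ^ 2 / n) = Real.exp (-t) - Real.exp (-t) * t ^ 2 / n := by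
    ring
  linarith [h6, expand]

lemma phi_le_psi {n : ℕ} (hn : 1 ≤ n) {t : ℝ} (h0 : 0 ≤ t) (h1 : t ≤ n) :
    phi t ≤ psi n t := by
  rcases eq_or_lt_of_le h0 with rfl | ht
  · have hn' : (n : ℝ) ≠ 0 := Nat.cast_ne_zero.2 (by omega)
    simp [phi, psi, div_self hn']
  · rw [phi_of_ne ht.ne', psi_eq hn ht.ne']
    gcongr
    · exact pow_le_exp hn h0 h1

lemma psi_le_phi_add {n : ℕ} (hn : 1 ≤ n) {t : ℝ} (h0 : 0 ≤ t) (h1 : t ≤ n) :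
    psi n t ≤ phi t + Real.exp (-t) * t / n := by
  have hn' : (0 : ℝ) < n := by exact_mod_cast (by omega : 0 < n)
  rcases eq_or_lt_of_le h0 with rfl | ht
  · have hne : (n : ℝ) ≠ 0 := hn'.ne'
    simp [phi, psi, div_self hne]
  · rw [phi_of_ne ht.ne', psi_eq hn ht.ne']
    have key := exp_sub_pow_le hn h0 h1
    have h2 : (1 - (1 - t / n) ^ n) / t - (1 - Real.exp (-t)) / t
        = (Real.exp (-t) - (1 - t / n) ^ n) / t := by
      rw [div_sub_div_same]; ring_nf
    have h3 : (Real.exp (-t) - (1 - t / n) ^ n) / t ≤ Real.exp (-t) * t / n := by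
      rw [div_le_iff₀ ht]
      calc Real.exp (-t) - (1 - t / n) ^ n ≤ Real.exp (-t) * t ^ 2 / n := key
        _ = Real.exp (-t) * t / n * t := by ring
    linarith [h2, h3]
lemma int_texp (n : ℕ) : ∫ t in (0:ℝ)..n, Real.exp (-t) * t ≤ 1 := by
  have key : ∀ t : ℝ, HasDerivAt (fun t : ℝ => -((t + 1) * Real.exp (-t)))
      (Real.exp (-t) * t) t := by
    intro t
    have h1 : HasDerivAt (fun t : ℝ => Real.exp (-t)) (-Real.exp (-t)) t := by
      simpa using ((hasDerivAt_id t).neg).exp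
    have h2 := (((hasDerivAt_id t).add_const 1).mul h1).neg
    refine h2.congr_deriv ?_
    simp
    ring
  rw [intervalIntegral.integral_eq_sub_of_hasDerivAt (fun t _ => key t)
    ((Continuous.mul (by fun_prop) (by fun_prop)).intervalIntegrable _ _)]
  have h1 : (0:ℝ) ≤ ((n : ℝ) + 1) * Real.exp (-(n:ℝ)) := by positivity
  have h2 : Real.exp (-(0:ℝ)) = 1 := by norm_num
  nlinarith

lemma Ein_le_harmonic (n : ℕ) (hn : 1 ≤ n) : Ein n ≤ (harmonic n : ℝ) := by
  have h0n : (0:ℝ) ≤ n := Nat.cast_nonneg n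
  rw [Ein_eq, ← integral_psi n hn]
  exact intervalIntegral.integral_mono_on h0n
    (continuous_phi.intervalIntegrable _ _) ((continuous_psi n).intervalIntegrable _ _)
    (fun t ht => phi_le_psi hn ht.1 ht.2)

lemma harmonic_le_Ein (n : ℕ) (hn : 1 ≤ n) : (harmonic n : ℝ) ≤ Ein n + 1 / n := by
  have h0n : (0:ℝ) ≤ n := Nat.cast_nonneg n
  have hn' : (0:ℝ) < n := by exact_mod_cast (by omega : 0 < n)
  have step1 : (harmonic n : ℝ) ≤ ∫ t in (0:ℝ)..n, (phi t + Real.exp (-t) * t / n) := by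
    rw [← integral_psi n hn]
    exact intervalIntegral.integral_mono_on h0n
      ((continuous_psi n).intervalIntegrable _ _)
      ((continuous_phi.add (by fun_prop)).intervalIntegrable _ _)
      (fun t ht => psi_le_phi_add hn ht.1 ht.2)
  have step2 : (∫ t in (0:ℝ)..n, (phi t + Real.exp (-t) * t / n))
      = Ein n + (∫ t in (0:ℝ)..n, Real.exp (-t) * t) / n := by
    rw [intervalIntegral.integral_add (continuous_phi.intervalIntegrable _ _)
      ((Continuous.div_const (by fun_prop) _).intervalIntegrable _ _),
      intervalIntegral.integral_div, Ein_eq]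
  have step3 : (∫ t in (0:ℝ)..n, Real.exp (-t) * t) / n ≤ 1 / n := by
    gcongr
    exact int_texp n
  linarith [step1, step2.le, step3, step2.ge]

noncomputable def gfun (w : ℝ) : ℝ := Ein w - Real.log w

lemma tendsto_gfun :
    Tendsto (fun n : ℕ => gfun n) atTop (𝓝 Real.eulerMascheroniConstant) := by
  have hlow : Tendsto (fun n : ℕ => (harmonic n : ℝ) - Real.log n - 1 / n) atTop
      (𝓝 Real.eulerMascheroniConstant) := by
    have := Real.tendsto_harmonic_sub_log.sub tendsto_one_div_atTop_nhds_zero_nat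
    simpa using this
  have hup := Real.tendsto_harmonic_sub_log
  refine tendsto_of_tendsto_of_tendsto_of_le_of_le' hlow hup ?_ ?_
  · filter_upwards [eventually_ge_atTop 1] with n hn
    have := harmonic_le_Ein n hn
    simp only [gfun]; linarith
  · filter_upwards [eventually_ge_atTop 1] with n hn
    have := Ein_le_harmonic n hn
    simp only [gfun]; linarith

lemma strictAntiOn_gfun : StrictAntiOn gfun (Set.Ioi (0:ℝ)) := by
  have hderiv : ∀ w ∈ Set.Ioi (0:ℝ), HasDerivAt gfun (phi w - 1 / w) w := fun w hw =>
    (hasDerivAt_Ein w).sub (by simpa [one_div] using Real.hasDerivAt_log (ne_of_gt hw))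
  apply strictAntiOn_of_deriv_neg (convex_Ioi 0)
  · exact fun w hw => ((hderiv w hw).continuousAt).continuousWithinAt
  · intro w hw
    rw [interior_Ioi] at hw
    rw [(hderiv w hw).deriv]
    have hw' : (0:ℝ) < w := hw
    have : phi w - 1 / w = -Real.exp (-w) / w := by
      rw [phi_of_ne hw'.ne']
      field_simp
      ring
    rw [this]
    exact div_neg_of_neg_of_pos (neg_lt_zero.2 (Real.exp_pos _)) hw'
lemma gamma_le_gfun (n : ℕ) (hn : 1 ≤ n) : Real.eulerMascheroniConstant ≤ gfun n := by
  refine le_of_tendsto tendsto_gfun ?_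
  filter_upwards [eventually_ge_atTop n] with m hm
  rcases eq_or_lt_of_le hm with rfl | hlt
  · exact le_rfl
  · have h1 : (0:ℝ) < n := by exact_mod_cast (by omega : 0 < n)
    have h2 : (n:ℝ) < m := by exact_mod_cast hlt
    exact (strictAntiOn_gfun (Set.mem_Ioi.2 h1) (Set.mem_Ioi.2 (h1.trans h2)) h2).le

lemma gamma_lt_gfun {w : ℝ} (hw : 0 < w) : Real.eulerMascheroniConstant < gfun w := by
  set n : ℕ := ⌈w⌉₊ + 1 with hn
  have hwn : w < n := by
    have := Nat.le_ceil w
    push_cast [hn]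
    linarith
  have h1 : Real.eulerMascheroniConstant ≤ gfun n := gamma_le_gfun n (by omega)
  have h2 : gfun n < gfun w :=
    strictAntiOn_gfun (Set.mem_Ioi.2 hw) (Set.mem_Ioi.2 (hw.trans hwn)) hwn
  linarith

lemma fio_lt (w : ℝ) : fio w < Real.exp (-Real.eulerMascheroniConstant) := by
  rcases le_or_gt w 0 with hw | hw
  · have h1 : fio w ≤ 0 := mul_nonpos_iff.2 (Or.inr ⟨hw, (Real.exp_pos _).le⟩)
    exact h1.trans_lt (Real.exp_pos _)
  · have h1 : fio w = Real.exp (Real.log w - Ein w) := by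
      rw [Real.exp_sub, Real.exp_log hw, fio, Real.exp_neg, div_eq_mul_inv]
    rw [h1]
    apply Real.exp_lt_exp.2
    have := gamma_lt_gfun hw
    rw [gfun] at this
    linarith

lemma fio_zero : fio 0 = 0 := by simp [fio]

/-- The inverse function `α` of `w ↦ w·e^{−Ein(w)}` satisfies
`α'(η) = exp(α(η) + Ein(α(η)))` on `(0, e^{−γ})`, and `α` is convex and strictly increasing
on `[0, e^{−γ})`, with `α(0) = 0` and `α(η) → ∞` as `η → e^{−γ}` (from the left). -/
theorem stmt4 (α : ℝ → ℝ)
    (hα : ∀ η : ℝ, 0 ≤ η → η < Real.exp (-Real.eulerMascheroniConstant) →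
      0 ≤ α η ∧ α η * Real.exp (-(Ein (α η))) = η) :
    (∀ η : ℝ, 0 < η → η < Real.exp (-Real.eulerMascheroniConstant) →
        HasDerivAt α (Real.exp (α η + Ein (α η))) η) ∧
    ConvexOn ℝ (Set.Ico 0 (Real.exp (-Real.eulerMascheroniConstant))) α ∧
    StrictMonoOn α (Set.Ico 0 (Real.exp (-Real.eulerMascheroniConstant))) ∧
    α 0 = 0 ∧
    Tendsto α (nhdsWithin (Real.exp (-Real.eulerMascheroniConstant))
      (Set.Iio (Real.exp (-Real.eulerMascheroniConstant)))) atTop := by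
  set E := Real.exp (-Real.eulerMascheroniConstant) with hE
  have hE0 : (0:ℝ) < E := Real.exp_pos _
  have hfα : ∀ η : ℝ, 0 ≤ η → η < E → fio (α η) = η := fun η h1 h2 => (hα η h1 h2).2
  have hα0 : ∀ η : ℝ, 0 ≤ η → η < E → 0 ≤ α η := fun η h1 h2 => (hα η h1 h2).1
  have hmono : StrictMonoOn α (Set.Ico 0 E) := by
    intro x hx y hy hxy
    have h : fio (α x) < fio (α y) := by
      rw [hfα x hx.1 hx.2, hfα y hy.1 hy.2]; exact hxy
    exact fio_strictMono.lt_iff_lt.1 h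
  have hzero : α 0 = 0 := by
    apply fio_strictMono.injective
    rw [hfα 0 le_rfl hE0, fio_zero]
  have cont_at : ∀ η : ℝ, 0 < η → η < E → ContinuousAt α η := by
    intro η h1 h2
    have hmem : ∀ᶠ y in 𝓝 η, y ∈ Set.Ioo (0:ℝ) E := isOpen_Ioo.eventually_mem ⟨h1, h2⟩
    rw [ContinuousAt, tendsto_order]
    constructor
    · intro b hb
      rcases lt_or_ge b 0 with hb0 | hb0
      · filter_upwards [hmem] with y hy
        exact hb0.trans_le (hα0 y hy.1.le hy.2)
      · have hfb : fio b < η := by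
          rw [← hfα η h1.le h2]; exact fio_strictMono hb
        filter_upwards [hmem, eventually_gt_nhds hfb] with y hy hy2
        by_contra hc
        push_neg at hc
        have h3 := fio_strictMono.monotone hc
        rw [hfα y hy.1.le hy.2] at h3
        linarith
    · intro b hb
      have hfb : η < fio b := by rw [← hfα η h1.le h2]; exact fio_strictMono hb
      filter_upwards [hmem, eventually_lt_nhds hfb] with y hy hy2
      by_contra hc
      push_neg at hc
      have h3 := fio_strictMono.monotone hc
      rw [hfα y hy.1.le hy.2] at h3
      linarith
  have hder : ∀ η : ℝ, 0 < η → η < E →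
      HasDerivAt α (Real.exp (α η + Ein (α η))) η := by
    intro η h1 h2
    have hmem : ∀ᶠ y in 𝓝 η, y ∈ Set.Ioo (0:ℝ) E := isOpen_Ioo.eventually_mem ⟨h1, h2⟩
    have hw := hasDerivAt_fio (α η)
    have hne : Real.exp (-(Ein (α η))) * Real.exp (-(α η)) ≠ 0 := by positivity
    have hfg : ∀ᶠ y in 𝓝 η, fio (α y) = y := by
      filter_upwards [hmem] with y hy
      exact hfα y hy.1.le hy.2
    have hres := HasDerivAt.of_local_left_inverse (cont_at η h1 h2) hw hne hfg
    refine hres.congr_deriv ?_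
    rw [← Real.exp_add, ← Real.exp_neg]
    congr 1
    ring
  have hconton : ContinuousOn α (Set.Ico 0 E) := by
    intro η hη
    rcases eq_or_lt_of_le hη.1 with rfl | hpos
    · rw [ContinuousWithinAt, hzero, tendsto_order]
      constructor
      · intro b hb
        filter_upwards [self_mem_nhdsWithin] with y hy
        exact hb.trans_le (hα0 y hy.1 hy.2)
      · intro b hb
        have hfb : (0:ℝ) < fio b := by rw [← fio_zero]; exact fio_strictMono hb
        filter_upwards [(eventually_lt_nhds hfb).filter_mono nhdsWithin_le_nhds,
          self_mem_nhdsWithin] with y hy1 hy2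
        by_contra hc
        push_neg at hc
        have h3 := fio_strictMono.monotone hc
        rw [hfα y hy2.1 hy2.2] at h3
        linarith
    · exact (cont_at η hpos hη.2).continuousWithinAt
  have hconv : ConvexOn ℝ (Set.Ico 0 E) α := by
    apply MonotoneOn.convexOn_of_deriv (convex_Ico 0 E) hconton
    · rw [interior_Ico]
      exact fun η hη => ((hder η hη.1 hη.2).differentiableAt).differentiableWithinAt
    · rw [interior_Ico]
      intro x hx y hy hxy
      rw [(hder x hx.1 hx.2).deriv, (hder y hy.1 hy.2).deriv]
      apply Real.exp_le_exp.2
      have hsub : Set.Ioo (0:ℝ) E ⊆ Set.Ico 0 E := Set.Ioo_subset_Ico_self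
      have hαxy : α x ≤ α y := hmono.monotoneOn (hsub hx) (hsub hy) hxy
      exact add_le_add hαxy (Ein_monotone hαxy)
  refine ⟨hder, hconv, hmono, hzero, ?_⟩
  rw [tendsto_atTop]
  intro M
  have hM0 : (0:ℝ) ≤ max M 0 := le_max_right _ _
  have hfM : fio (max M 0) < E := fio_lt (max M 0)
  have hfM0 : (0:ℝ) ≤ fio (max M 0) := by
    have h := fio_strictMono.monotone hM0
    rwa [fio_zero] at h
  filter_upwards [(eventually_gt_nhds hfM).filter_mono nhdsWithin_le_nhds,
    self_mem_nhdsWithin] with y hy1 hy2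
  have hy0 : 0 ≤ y := hfM0.trans hy1.le
  have hyE : y < E := hy2
  have hlt : max M 0 < α y := by
    by_contra hc
    push_neg at hc
    have h3 := fio_strictMono.monotone hc
    rw [hfα y hy0 hyE] at h3
    linarith
  exact (le_max_left M 0).trans hlt.le
end

section
/- Let X₁,…,Xₙ be independent Bernoulli random variables with P(Xᵢ = 1) = pᵢ, and let X = X₁ + ⋯ + Xₙ and μ = p₁ + ⋯ + pₙ. Then Σ_{k≥0} |P(X = k) − e^{−μ}μᵏ/k!| ≤ 2·Σᵢ pᵢ². -/
open MeasureTheory ProbabilityTheory Finset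
open scoped ENNReal

namespace LeCamAux

noncomputable def poi (l : ℝ) (k : ℕ) : ℝ := Real.exp (-l) * l ^ k / k.factorial

noncomputable def ber (p : ℝ) : ℕ → ℝ
  | 0 => 1 - p
  | 1 => p
  | _ => 0

noncomputable def conv (a b : ℕ → ℝ) (k : ℕ) : ℝ := ∑ m ∈ range (k + 1), a m * b (k - m)

lemma poi_nonneg {l : ℝ} (hl : 0 ≤ l) (k : ℕ) : 0 ≤ poi l k := by unfold poi; positivity

lemma summable_poi (l : ℝ) : Summable (poi l) := by
  have := (Real.summable_pow_div_factorial l).mul_left (Real.exp (-l))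
  refine this.congr fun k => ?_
  unfold poi; ring

lemma tsum_poi (l : ℝ) : ∑' k, poi l k = 1 := by
  unfold poi
  have h : ∑' k : ℕ, Real.exp (-l) * l ^ k / (k.factorial : ℝ)
      = Real.exp (-l) * ∑' k : ℕ, l ^ k / (k.factorial : ℝ) := by
    rw [← tsum_mul_left]; congr 1 with k; ring
  have h2 : (∑' k : ℕ, l ^ k / (k.factorial : ℝ)) = Real.exp l := by
    rw [Real.exp_eq_exp_ℝ, NormedSpace.exp_eq_tsum_div]
  rw [h, h2, ← Real.exp_add]; simp

lemma ber_nonneg {p : ℝ} (h0 : 0 ≤ p) (h1 : p ≤ 1) (k : ℕ) : 0 ≤ ber p k := by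
  match k with
  | 0 => simpa [ber] using h1
  | 1 => simpa [ber] using h0
  | (n+2) => simp [ber]

lemma summable_ber (p : ℝ) : Summable (ber p) := by
  apply summable_of_ne_finset_zero (s := {0, 1})
  intro k hk
  match k with
  | 0 => simp at hk
  | 1 => simp at hk
  | (n+2) => simp [ber]

lemma tsum_ber (p : ℝ) : ∑' k, ber p k = 1 := by
  rw [tsum_eq_sum (s := {0, 1}) (by intro k hk; match k with
    | 0 => simp at hk
    | 1 => simp at hk
    | (n+2) => simp [ber])]
  simp [ber]

set_option maxHeartbeats 1000000 in
lemma summable_abs_sub {f g : ℕ → ℝ} (hf : Summable f) (hg : Summable g) :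
    Summable fun k => |f k - g k| := by
  have h : Summable fun k => |f k| + |g k| := hf.abs.add hg.abs
  exact h.of_nonneg_of_le (fun k => abs_nonneg _) (fun k => by
    rw [sub_eq_add_neg]
    exact (abs_add_le _ _).trans_eq (by rw [abs_neg]))

set_option maxHeartbeats 1000000 in
lemma tsum_abs_ber_sub_poi {p : ℝ} (h0 : 0 ≤ p) (h1 : p ≤ 1) :
    ∑' k, |ber p k - poi p k| ≤ 2 * p ^ 2 := by
  set e := Real.exp (-p) with he
  have he1 : 1 - p ≤ e := by
    have := Real.add_one_le_exp (-p); linarith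
  have he2 : e ≤ 1 := by
    rw [he, ← Real.exp_zero]; exact Real.exp_le_exp.mpr (by linarith)
  have hd := summable_abs_sub (summable_ber p) (summable_poi p)
  have hd1 : Summable fun k => |ber p (k + 1) - poi p (k + 1)| := (summable_nat_add_iff 1).mpr hd
  have hp := summable_poi p
  have hp1 : Summable fun k => poi p (k + 1) := (summable_nat_add_iff 1).mpr hp
  have hber2 : ∀ k : ℕ, ber p (k + 2) = 0 := fun k => rfl
  have habs2 : ∀ k : ℕ, |ber p (k + 2) - poi p (k + 2)| = poi p (k + 2) := by
    intro k
    rw [hber2, zero_sub, abs_neg, abs_of_nonneg (poi_nonneg h0 _)]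
  have htail : ∑' k : ℕ, poi p (k + 2) = 1 - poi p 0 - poi p 1 := by
    have e1 := Summable.tsum_eq_zero_add hp
    have e2 := Summable.tsum_eq_zero_add hp1
    rw [tsum_poi] at e1
    linarith [e1, e2]
  have hpoi0 : poi p 0 = e := by simp [poi, he]
  have hpoi1 : poi p 1 = e * p := by simp [poi, he]
  have hsum : ∑' k, |ber p k - poi p k|
      = |ber p 0 - poi p 0| + |ber p 1 - poi p 1| + ∑' k : ℕ, poi p (k + 2) := by
    rw [Summable.tsum_eq_zero_add hd, Summable.tsum_eq_zero_add hd1]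
    rw [add_assoc]
    congr 1
    congr 1
    exact tsum_congr habs2
  have hb0 : ber p 0 = 1 - p := rfl
  have hb1 : ber p 1 = p := rfl
  have ha0 : |ber p 0 - poi p 0| = e - (1 - p) := by
    rw [hb0, hpoi0, abs_of_nonpos (by linarith), neg_sub]
  have ha1 : |ber p 1 - poi p 1| = p - e * p := by
    rw [hb1, hpoi1, abs_of_nonneg (by nlinarith)]
  rw [hsum, htail, ha0, ha1, hpoi0, hpoi1]
  nlinarith

lemma conv_comm (a b : ℕ → ℝ) : conv a b = conv b a := by
  funext k
  unfold conv
  rw [← Finset.sum_range_reflect]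
  refine Finset.sum_congr rfl fun m hm => ?_
  rw [Finset.mem_range] at hm
  have hm' : m ≤ k := Nat.lt_succ_iff.mp hm
  rw [Nat.add_sub_cancel, Nat.sub_sub_self hm', mul_comm]

lemma abs_conv_sub_conv (a b c : ℕ → ℝ) (hc : ∀ k, 0 ≤ c k) (k : ℕ) :
    |conv a c k - conv b c k| ≤ conv (fun m => |a m - b m|) c k := by
  unfold conv
  rw [← Finset.sum_sub_distrib]
  refine (Finset.abs_sum_le_sum_abs _ _).trans ?_
  refine Finset.sum_le_sum fun m _ => ?_
  rw [← sub_mul, abs_mul, abs_of_nonneg (hc _)]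

lemma summable_conv {f g : ℕ → ℝ} (hf0 : ∀ k, 0 ≤ f k) (hg0 : ∀ k, 0 ≤ g k)
    (hf : Summable f) (hg : Summable g) : Summable (conv f g) := by
  have hf' : Summable fun k => ‖f k‖ := by
    simpa [Real.norm_eq_abs, abs_of_nonneg (hf0 _)] using hf
  have hg' : Summable fun k => ‖g k‖ := by
    simpa [Real.norm_eq_abs, abs_of_nonneg (hg0 _)] using hg
  exact summable_sum_mul_range_of_summable_norm' hf' hf hg' hg

lemma tsum_conv {f g : ℕ → ℝ} (hf0 : ∀ k, 0 ≤ f k) (hg0 : ∀ k, 0 ≤ g k)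
    (hf : Summable f) (hg : Summable g) :
    ∑' k, conv f g k = (∑' k, f k) * (∑' k, g k) := by
  have hf' : Summable fun k => ‖f k‖ := by
    simpa [Real.norm_eq_abs, abs_of_nonneg (hf0 _)] using hf
  have hg' : Summable fun k => ‖g k‖ := by
    simpa [Real.norm_eq_abs, abs_of_nonneg (hg0 _)] using hg
  exact (tsum_mul_tsum_eq_tsum_sum_range_of_summable_norm hf' hg').symm

lemma conv_poi_poi (x y : ℝ) : conv (poi x) (poi y) = poi (x + y) := by
  funext k
  unfold conv poi
  rw [add_pow, Finset.mul_sum, Finset.sum_div]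
  refine Finset.sum_congr rfl fun m hm => ?_
  rw [Finset.mem_range, Nat.lt_succ_iff] at hm
  have h' : ((k.choose m : ℝ)) * (m.factorial : ℝ) * ((k - m).factorial : ℝ)
      = (k.factorial : ℝ) := by
    exact_mod_cast congrArg (Nat.cast (R := ℝ)) (Nat.choose_mul_factorial_mul_factorial hm)
  have hk0 : ((k.factorial : ℝ)) ≠ 0 := Nat.cast_ne_zero.mpr k.factorial_ne_zero
  have he : Real.exp (-(x + y)) = Real.exp (-x) * Real.exp (-y) := by
    rw [← Real.exp_add]; ring_nf
  rw [he, div_mul_div_comm, div_eq_div_iff (by positivity) hk0]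
  linear_combination (-(Real.exp (-x) * Real.exp (-y) * x ^ m * y ^ (k - m))) * h'

lemma conv_ber (a : ℕ → ℝ) (q : ℝ) (k : ℕ) :
    conv a (ber q) k = a k * (1 - q) + (if k = 0 then 0 else a (k - 1) * q) := by
  match k with
  | 0 => simp [conv, ber]
  | (k' + 1) =>
    unfold conv
    rw [Finset.sum_range_succ, Finset.sum_range_succ]
    have hz : ∑ m ∈ range k', a m * ber q (k' + 1 - m) = 0 := by
      refine Finset.sum_eq_zero fun m hm => ?_
      rw [Finset.mem_range] at hm
      obtain ⟨j, hj⟩ : ∃ j, k' + 1 - m = j + 2 := ⟨k' - 1 - m, by omega⟩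
      rw [hj]
      have : ber q (j + 2) = 0 := rfl
      rw [this, mul_zero]
    rw [hz, zero_add]
    have h1 : k' + 1 - k' = 1 := by omega
    have h2 : k' + 1 - (k' + 1) = 0 := by omega
    rw [h1, h2]
    have hb1 : ber q 1 = q := rfl
    have hb0 : ber q 0 = 1 - q := rfl
    rw [hb1, hb0]
    simp only [if_neg (Nat.succ_ne_zero k'), Nat.add_sub_cancel]
    ring

end LeCamAux

open LeCamAux

/-- **Le Cam's inequality.** -/
theorem stmt7 {Ω : Type*} [MeasureSpace Ω] [IsProbabilityMeasure (ℙ : Measure Ω)]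
    (n : ℕ) (X : Fin n → Ω → ℕ)
    (hmeas : ∀ i, Measurable (X i))
    (hBer : ∀ i ω, X i ω = 0 ∨ X i ω = 1)
    (hind : iIndepFun X ℙ)
    (p : Fin n → ℝ) (hp : ∀ i, p i = (ℙ {ω | X i ω = 1}).toReal)
    (μ : ℝ) (hμ : μ = ∑ i, p i) :
    ∑' k : ℕ, |(ℙ {ω | (∑ i, X i ω) = k}).toReal -
        Real.exp (-μ) * μ ^ k / (Nat.factorial k)| ≤ 2 * ∑ i, (p i) ^ 2 := by
  classical
  have hp0 : ∀ i, 0 ≤ p i := fun i => (hp i) ▸ ENNReal.toReal_nonneg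
  have hp1 : ∀ i, p i ≤ 1 := by
    intro i
    rw [hp i]
    have h := prob_le_one (μ := (ℙ : Measure Ω)) (s := {ω | X i ω = 1})
    calc (ℙ {ω | X i ω = 1}).toReal ≤ (1 : ℝ≥0∞).toReal :=
          ENNReal.toReal_mono ENNReal.one_ne_top h
      _ = 1 := by simp
  set Q : Finset (Fin n) → ℕ → ℝ := fun s k => (ℙ {ω | (∑ i ∈ s, X i ω) = k}).toReal with hQ
  have hSmeas : ∀ s : Finset (Fin n), Measurable fun ω => ∑ i ∈ s, X i ω :=
    fun s => Finset.measurable_sum s fun i _ => hmeas i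
  have hEmeas : ∀ (s : Finset (Fin n)) (k : ℕ), MeasurableSet {ω | (∑ i ∈ s, X i ω) = k} :=
    fun s k => (hSmeas s) (measurableSet_singleton k)
  have hQnonneg : ∀ s k, 0 ≤ Q s k := fun s k => ENNReal.toReal_nonneg
  have hQsummable : ∀ s : Finset (Fin n), Summable (Q s) := by
    intro s
    apply ENNReal.summable_toReal
    have hdisj : Pairwise (Function.onFun Disjoint fun k : ℕ => {ω | (∑ i ∈ s, X i ω) = k}) := by
      intro k l hkl
      refine Set.disjoint_left.mpr fun ω h1 h2 => hkl ?_
      simp only [Set.mem_setOf_eq] at h1 h2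
      omega
    rw [← measure_iUnion hdisj (fun k => hEmeas s k)]
    exact measure_ne_top _ _
  -- P(X j = 0)
  have hX0 : ∀ j, (ℙ {ω | X j ω = 0}).toReal = 1 - p j := by
    intro j
    have hdisj : Disjoint {ω | X j ω = 0} {ω | X j ω = 1} := by
      refine Set.disjoint_left.mpr fun ω h1 h2 => ?_
      simp only [Set.mem_setOf_eq] at h1 h2
      omega
    have hmeas1 : MeasurableSet {ω | X j ω = 1} := (hmeas j) (measurableSet_singleton 1)
    have hunion : {ω | X j ω = 0} ∪ {ω | X j ω = 1} = Set.univ := by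
      ext ω
      simp only [Set.mem_union, Set.mem_setOf_eq, Set.mem_univ, iff_true]
      exact hBer j ω
    have hadd : ℙ {ω | X j ω = 0} + ℙ {ω | X j ω = 1} = 1 := by
      rw [← measure_union hdisj hmeas1, hunion, measure_univ]
    have := congrArg ENNReal.toReal hadd
    rw [ENNReal.toReal_add (measure_ne_top _ _) (measure_ne_top _ _)] at this
    simp only [ENNReal.toReal_one] at this
    rw [hp j]
    linarith
  -- the decomposition
  have hdec : ∀ (j : Fin n) (s : Finset (Fin n)) (hj : j ∉ s) (k : ℕ),
      Q (Finset.cons j s hj) k = conv (Q s) (ber (p j)) k := by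
    intro j s hj k
    have hIndep : IndepFun (∑ i ∈ s, X i) (X j) ℙ :=
      hind.indepFun_finsetSum_of_notMem hmeas hj
    have hprod : ∀ (A B : Set ℕ), MeasurableSet A → MeasurableSet B →
        ℙ ((fun ω => ∑ i ∈ s, X i ω) ⁻¹' A ∩ X j ⁻¹' B)
          = ℙ ((fun ω => ∑ i ∈ s, X i ω) ⁻¹' A) * ℙ (X j ⁻¹' B) := by
      intro A B hA hB
      have hfun : (∑ i ∈ s, X i) = fun ω => ∑ i ∈ s, X i ω := by
        funext ω; simp [Finset.sum_apply]
      have := hIndep.measure_inter_preimage_eq_mul A B hA hB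
      rwa [hfun] at this
    have hcons : ∀ ω, ∑ i ∈ Finset.cons j s hj, X i ω = X j ω + ∑ i ∈ s, X i ω := by
      intro ω; rw [Finset.sum_cons]
    rw [conv_ber]
    match k with
    | 0 =>
      have hset : {ω | (∑ i ∈ Finset.cons j s hj, X i ω) = 0}
          = (fun ω => ∑ i ∈ s, X i ω) ⁻¹' {0} ∩ X j ⁻¹' {0} := by
        ext ω
        simp only [Set.mem_setOf_eq, Set.mem_inter_iff, Set.mem_preimage,
          Set.mem_singleton_iff, hcons ω]
        omega
      simp only [hQ]
      rw [hset, hprod {0} {0} (measurableSet_singleton 0) (measurableSet_singleton 0),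
        ENNReal.toReal_mul]
      have : (ℙ (X j ⁻¹' {0})).toReal = 1 - p j := hX0 j
      rw [this, if_pos trivial, add_zero]
      rfl
    | (k' + 1) =>
      have hset : {ω | (∑ i ∈ Finset.cons j s hj, X i ω) = k' + 1}
          = ((fun ω => ∑ i ∈ s, X i ω) ⁻¹' {k' + 1} ∩ X j ⁻¹' {0})
            ∪ ((fun ω => ∑ i ∈ s, X i ω) ⁻¹' {k'} ∩ X j ⁻¹' {1}) := by
        ext ω
        simp only [Set.mem_setOf_eq, Set.mem_union, Set.mem_inter_iff, Set.mem_preimage,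
          Set.mem_singleton_iff, hcons ω]
        rcases hBer j ω with h | h <;> rw [h] <;> omega
      have hdisj2 : Disjoint ((fun ω => ∑ i ∈ s, X i ω) ⁻¹' {k' + 1} ∩ X j ⁻¹' {0})
          ((fun ω => ∑ i ∈ s, X i ω) ⁻¹' {k'} ∩ X j ⁻¹' {1}) := by
        refine Set.disjoint_left.mpr fun ω h1 h2 => ?_
        simp only [Set.mem_inter_iff, Set.mem_preimage, Set.mem_singleton_iff] at h1 h2
        omega
      have hm2 : MeasurableSet ((fun ω => ∑ i ∈ s, X i ω) ⁻¹' {k'} ∩ X j ⁻¹' {1}) :=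
        ((hSmeas s) (measurableSet_singleton k')).inter ((hmeas j) (measurableSet_singleton 1))
      simp only [hQ]
      rw [hset, measure_union hdisj2 hm2,
        hprod {k' + 1} {0} (measurableSet_singleton _) (measurableSet_singleton _),
        hprod {k'} {1} (measurableSet_singleton _) (measurableSet_singleton _),
        ENNReal.toReal_add (by finiteness) (by finiteness),
        ENNReal.toReal_mul, ENNReal.toReal_mul]
      have h0 : (ℙ (X j ⁻¹' {0})).toReal = 1 - p j := hX0 j
      have h1 : (ℙ (X j ⁻¹' {1})).toReal = p j := by rw [hp j]; rfl
      rw [h0, h1, if_neg (Nat.succ_ne_zero k'), Nat.add_sub_cancel]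
      rfl
  -- main induction
  have key : ∀ s : Finset (Fin n),
      ∑' k, |Q s k - poi (∑ i ∈ s, p i) k| ≤ 2 * ∑ i ∈ s, p i ^ 2 := by
    intro s
    induction s using Finset.cons_induction with
    | empty =>
      have hz : ∀ k, |Q ∅ k - poi (∑ i ∈ (∅ : Finset (Fin n)), p i) k| = 0 := by
        intro k
        rw [Finset.sum_empty]
        match k with
        | 0 =>
          have hQ0 : Q ∅ 0 = 1 := by
            simp only [hQ, Finset.sum_empty]
            have : {ω : Ω | True} = Set.univ := Set.setOf_true
            rw [this]
            simp
          have hpoi : poi 0 0 = 1 := by simp [poi]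
          rw [hQ0, hpoi]; simp
        | (k' + 1) =>
          have hQ0 : Q ∅ (k' + 1) = 0 := by
            simp only [hQ, Finset.sum_empty]
            have : {ω : Ω | (0 : ℕ) = k' + 1} = ∅ := by
              ext ω; simp
            rw [this, measure_empty]; simp
          have hpoi : poi 0 (k' + 1) = 0 := by simp [poi]
          rw [hQ0, hpoi]; simp
      calc ∑' k, |Q ∅ k - poi (∑ i ∈ (∅ : Finset (Fin n)), p i) k|
          = ∑' k : ℕ, (0 : ℝ) := tsum_congr hz
        _ = 0 := tsum_zero
        _ ≤ 2 * ∑ i ∈ (∅ : Finset (Fin n)), p i ^ 2 := by simp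
    | cons j s hj ih =>
      set μs := ∑ i ∈ s, p i with hμs
      have hμs0 : 0 ≤ μs := Finset.sum_nonneg fun i _ => hp0 i
      set q := p j with hq
      have hq0 : 0 ≤ q := hp0 j
      have hq1 : q ≤ 1 := hp1 j
      have hsum_cons : ∑ i ∈ Finset.cons j s hj, p i = q + μs := by
        rw [Finset.sum_cons]
      have hsq_cons : ∑ i ∈ Finset.cons j s hj, p i ^ 2 = q ^ 2 + ∑ i ∈ s, p i ^ 2 := by
        rw [Finset.sum_cons]
      -- bounding functions
      set A : ℕ → ℝ := fun m => |Q s m - poi μs m| with hA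
      set B : ℕ → ℝ := fun m => |ber q m - poi q m| with hB
      have hAnn : ∀ k, 0 ≤ A k := fun k => abs_nonneg _
      have hBnn : ∀ k, 0 ≤ B k := fun k => abs_nonneg _
      have hAs : Summable A := summable_abs_sub (hQsummable s) (summable_poi μs)
      have hBs : Summable B := summable_abs_sub (summable_ber q) (summable_poi q)
      set D1 := conv A (ber q) with hD1
      set D2 := conv B (poi μs) with hD2
      have hD1s : Summable D1 :=
        summable_conv hAnn (ber_nonneg hq0 hq1) hAs (summable_ber q)
      have hD2s : Summable D2 :=
        summable_conv hBnn (poi_nonneg hμs0) hBs (summable_poi μs)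
      have hD1t : ∑' k, D1 k = ∑' k, A k := by
        rw [hD1, tsum_conv hAnn (ber_nonneg hq0 hq1) hAs (summable_ber q), tsum_ber, mul_one]
      have hD2t : ∑' k, D2 k = ∑' k, B k := by
        rw [hD2, tsum_conv hBnn (poi_nonneg hμs0) hBs (summable_poi μs), tsum_poi, mul_one]
      have hptwise : ∀ k, |Q (Finset.cons j s hj) k - poi (q + μs) k| ≤ D1 k + D2 k := by
        intro k
        rw [hdec j s hj k]
        have step1 : |conv (Q s) (ber q) k - poi (q + μs) k|
            ≤ |conv (Q s) (ber q) k - conv (poi μs) (ber q) k|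
              + |conv (poi μs) (ber q) k - poi (q + μs) k| := abs_sub_le _ _ _
        refine step1.trans (add_le_add ?_ ?_)
        · exact abs_conv_sub_conv (Q s) (poi μs) (ber q) (ber_nonneg hq0 hq1) k
        · have hcomm1 : conv (poi μs) (ber q) k = conv (ber q) (poi μs) k := by
            rw [conv_comm]
          have hcomm2 : poi (q + μs) k = conv (poi q) (poi μs) k := by
            rw [conv_poi_poi]
          rw [hcomm1, hcomm2]
          exact abs_conv_sub_conv (ber q) (poi q) (poi μs) (poi_nonneg hμs0) k
      have hLHSs : Summable fun k => |Q (Finset.cons j s hj) k - poi (q + μs) k| :=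
        (hD1s.add hD2s).of_nonneg_of_le (fun k => abs_nonneg _) hptwise
      calc ∑' k, |Q (Finset.cons j s hj) k - poi (∑ i ∈ Finset.cons j s hj, p i) k|
          = ∑' k, |Q (Finset.cons j s hj) k - poi (q + μs) k| := by rw [hsum_cons]
        _ ≤ ∑' k, (D1 k + D2 k) := Summable.tsum_le_tsum hptwise hLHSs (hD1s.add hD2s)
        _ = (∑' k, D1 k) + ∑' k, D2 k := Summable.tsum_add hD1s hD2s
        _ = (∑' k, A k) + ∑' k, B k := by rw [hD1t, hD2t]
        _ ≤ 2 * ∑ i ∈ s, p i ^ 2 + 2 * q ^ 2 :=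
            add_le_add ih (tsum_abs_ber_sub_poi hq0 hq1)
        _ = 2 * ∑ i ∈ Finset.cons j s hj, p i ^ 2 := by rw [hsq_cons]; ring
  have hfinal := key Finset.univ
  rw [← hμ] at hfinal
  exact hfinal
end

section
/- Fix m, z > 0 and for each integer k ≥ 2 define s̃_k := (m/(k(k−1)))·e^{−m/z}·Σ_{ℓ=k−1}^∞ (1/ℓ!)·(m/z)^ℓ. Then Σ_{k≥2} k·s̃_k = m·Ein(m/z), where Ein(w) = ∫₀^w (1−e^{−t})/t dt. -/
/-- `s̃_k = (m/(k(k−1)))·e^{−m/z}·∑_{ℓ=k−1}^∞ (m/z)^ℓ/ℓ!` (with the sum reindexed from `0`). -/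
noncomputable def stilde (m z : ℝ) (k : ℕ) : ℝ :=
  m / ((k : ℝ) * ((k : ℝ) - 1)) * Real.exp (-(m / z)) *
    ∑' ℓ : ℕ, (m / z) ^ (ℓ + (k - 1)) / (Nat.factorial (ℓ + (k - 1)))

section Aux

lemma summable_ein (w : ℝ) : Summable fun n : ℕ =>
    ((-1:ℝ)) ^ n * w ^ (n+1) / ((n+1) * (n+1).factorial) := by
  apply Summable.of_norm
  have h : Summable fun n : ℕ => |w| * (|w| ^ n / n.factorial) :=
    (Real.summable_pow_div_factorial |w|).mul_left _
  refine h.of_nonneg_of_le (fun n => norm_nonneg _) fun n => ?_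
  have h1 : ‖((-1:ℝ)) ^ n * w ^ (n+1) / ((n+1) * (n+1).factorial)‖
      = |w| ^ (n+1) / ((n+1) * (n+1).factorial) := by
    rw [norm_div, norm_mul, norm_pow, norm_pow]
    simp only [norm_neg, norm_one, one_pow, one_mul, Real.norm_eq_abs]
    rw [abs_of_nonneg (by positivity : (0:ℝ) ≤ ((n:ℝ)+1) * ((n+1).factorial:ℝ))]
  rw [h1]
  have hf : (n.factorial : ℝ) ≤ ((n:ℝ)+1) * (n+1).factorial := by
    have : (n.factorial : ℝ) ≤ ((n+1).factorial : ℝ) := by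
      exact Nat.cast_le.mpr (Nat.factorial_le (Nat.le_succ n))
    nlinarith [this, (Nat.cast_pos (α := ℝ)).mpr (Nat.factorial_pos (n+1)), (by linarith : (1:ℝ) ≤ (n:ℝ)+1)]
  calc |w| ^ (n+1) / (((n:ℝ)+1) * (n+1).factorial) ≤ |w| ^ (n+1) / n.factorial := by
        apply div_le_div_of_nonneg_left (by positivity) (by positivity) hf
    _ = |w| * (|w| ^ n / n.factorial) := by rw [pow_succ]; ring

lemma integrand_series {t : ℝ} (ht : 0 < t) :
    (1 - Real.exp (-t)) / t = ∑' n : ℕ, ((-1:ℝ)) ^ n * t ^ n / (n+1).factorial := by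
  have hexp : Real.exp (-t) = ∑' n : ℕ, (-t) ^ n / n.factorial := by
    rw [Real.exp_eq_exp_ℝ, NormedSpace.exp_eq_tsum_div]
  have hsum : Summable fun n : ℕ => (-t) ^ n / (n.factorial : ℝ) := by
    apply Summable.of_norm
    refine (Real.summable_pow_div_factorial |t|).congr fun n => ?_
    rw [norm_div, norm_pow, norm_neg, Real.norm_eq_abs]
    simp
  have hsplit : Real.exp (-t) = 1 + ∑' n : ℕ, (-t) ^ (n+1) / (n+1).factorial := by
    rw [hexp, Summable.tsum_eq_zero_add hsum]; simp
  have : 1 - Real.exp (-t) = ∑' n : ℕ, ((-1:ℝ)) ^ n * t ^ (n+1) / (n+1).factorial := by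
    rw [hsplit, sub_add_eq_sub_sub, sub_self, zero_sub, ← tsum_neg]
    congr 1
    funext n
    have hp : (-t) ^ (n+1) = (-1:ℝ) ^ (n+1) * t ^ (n+1) := by rw [neg_pow]
    rw [hp]
    ring
  rw [this, ← tsum_div_const]
  congr 1
  funext n
  rw [pow_succ]
  field_simp

lemma Ein_series {w : ℝ} (hw : 0 < w) :
    Ein w = ∑' n : ℕ, ((-1:ℝ)) ^ n * w ^ (n+1) / ((n+1) * (n+1).factorial) := by
  have hIoc : Ein w = ∫ t in Set.Ioc (0:ℝ) w, (1 - Real.exp (-t)) / t := by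
    rw [Ein, intervalIntegral.integral_of_le hw.le]
  set μ := MeasureTheory.volume.restrict (Set.Ioc (0:ℝ) w) with hμ
  set F : ℕ → ℝ → ℝ := fun n t => ((-1:ℝ)) ^ n * t ^ n / (n+1).factorial with hF
  have hcont : ∀ n, Continuous (F n) := fun n => by
    simp only [hF]
    fun_prop
  have hint : ∀ n, MeasureTheory.Integrable (F n) μ := fun n =>
    (hcont n).integrableOn_Ioc
  have hval : ∀ n, ∫ t, F n t ∂μ = ((-1:ℝ)) ^ n * w ^ (n+1) / ((n+1) * (n+1).factorial) := by
    intro n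
    have : ∫ t, F n t ∂μ = ∫ t in (0:ℝ)..w, F n t := by
      rw [intervalIntegral.integral_of_le hw.le]
    rw [this]
    simp only [hF]
    rw [intervalIntegral.integral_div, intervalIntegral.integral_const_mul,
      integral_pow]
    field_simp
    simp
  have hnorm : ∀ n, ∫ t, ‖F n t‖ ∂μ = w ^ (n+1) / ((n+1) * (n+1).factorial) := by
    intro n
    have hcongr : ∫ t, ‖F n t‖ ∂μ = ∫ t, t ^ n / (n+1).factorial ∂μ := by
      rw [hμ]
      apply MeasureTheory.setIntegral_congr_fun measurableSet_Ioc
      intro t ht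
      simp only [hF, norm_div, norm_mul, norm_pow, norm_neg, norm_one, one_pow, one_mul,
        Real.norm_eq_abs, abs_of_pos ht.1]
      rw [abs_of_nonneg (by positivity : (0:ℝ) ≤ ((n+1).factorial : ℝ))]
    rw [hcongr]
    have : ∫ t in Set.Ioc (0:ℝ) w, t ^ n / (n+1).factorial = ∫ t in (0:ℝ)..w, t ^ n / (n+1).factorial := by
      rw [intervalIntegral.integral_of_le hw.le]
    rw [hμ, this, intervalIntegral.integral_div, integral_pow]
    field_simp
    simp
  have hsummable : Summable fun n : ℕ => ∫ t, ‖F n t‖ ∂μ := by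
    refine (summable_ein w).abs.congr fun n => ?_
    rw [hnorm n, abs_div]
    rw [abs_of_nonneg (by positivity : (0:ℝ) ≤ ((n:ℝ)+1) * ((n+1).factorial:ℝ))]
    congr 1
    rw [abs_mul, abs_pow, abs_neg, abs_one, one_pow, one_mul, abs_pow,
      abs_of_pos hw]
  have hswap := MeasureTheory.integral_tsum_of_summable_integral_norm hint hsummable
  have hps : ∀ᵐ t ∂μ, (1 - Real.exp (-t)) / t = ∑' n, F n t := by
    rw [hμ, MeasureTheory.ae_restrict_iff' measurableSet_Ioc]
    filter_upwards with t
    intro h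
    simpa [hF] using integrand_series h.1
  rw [hIoc, MeasureTheory.integral_congr_ae hps, ← hswap]
  exact tsum_congr hval
lemma alt_choose_harmonic (n : ℕ) :
    ∑ k ∈ Finset.range n, ((-1:ℝ)) ^ k * (n.choose (k+1) : ℝ) / (k+1)
      = ∑ k ∈ Finset.range n, (1:ℝ) / (k+1) := by
  induction n with
  | zero => simp
  | succ n ih =>
    have key : ∑ k ∈ Finset.range (n+1), ((-1:ℝ)) ^ k * ((n+1).choose (k+1) : ℝ) / (k+1)
        = (∑ k ∈ Finset.range n, ((-1:ℝ)) ^ k * (n.choose (k+1) : ℝ) / (k+1)) + 1/(n+1) := by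
      have pascal : ∀ k, ((n+1).choose (k+1) : ℝ) = (n.choose k : ℝ) + (n.choose (k+1) : ℝ) := by
        intro k
        rw [Nat.choose_succ_succ]
        push_cast
        ring
      have split : ∑ k ∈ Finset.range (n+1), ((-1:ℝ)) ^ k * ((n+1).choose (k+1) : ℝ) / (k+1)
          = (∑ k ∈ Finset.range (n+1), ((-1:ℝ)) ^ k * (n.choose k : ℝ) / (k+1))
            + ∑ k ∈ Finset.range (n+1), ((-1:ℝ)) ^ k * (n.choose (k+1) : ℝ) / (k+1) := by
        rw [← Finset.sum_add_distrib]
        refine Finset.sum_congr rfl fun k _ => ?_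
        rw [pascal k]; ring
      have last0 : ((-1:ℝ)) ^ n * (n.choose (n+1) : ℝ) / (n+1) = 0 := by
        simp [Nat.choose_eq_zero_of_lt (Nat.lt_succ_self n)]
      have drop : ∑ k ∈ Finset.range (n+1), ((-1:ℝ)) ^ k * (n.choose (k+1) : ℝ) / (k+1)
          = ∑ k ∈ Finset.range n, ((-1:ℝ)) ^ k * (n.choose (k+1) : ℝ) / (k+1) := by
        rw [Finset.sum_range_succ, last0, add_zero]
      -- first sum equals 1/(n+1)
      have conv : ∀ k, ((-1:ℝ)) ^ k * (n.choose k : ℝ) / (k+1)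
          = ((-1:ℝ)) ^ k * ((n+1).choose (k+1) : ℝ) / (n+1) := by
        intro k
        have h := Nat.add_one_mul_choose_eq n k
        have h' : ((n:ℝ)+1) * (n.choose k : ℝ) = ((n+1).choose (k+1) : ℝ) * ((k:ℝ)+1) := by
          exact_mod_cast congrArg (Nat.cast (R := ℝ)) h
        field_simp
        linear_combination h'
      have alt : ∑ k ∈ Finset.range (n+2), ((-1:ℝ)) ^ k * ((n+1).choose k : ℝ) = 0 := by
        have := @Int.alternating_sum_range_choose (n+1)
        rw [if_neg (Nat.succ_ne_zero n)] at this
        have h2 := congrArg (fun z : ℤ => (z : ℝ)) this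
        push_cast at h2
        simpa using h2
      have first : ∑ k ∈ Finset.range (n+1), ((-1:ℝ)) ^ k * (n.choose k : ℝ) / (k+1)
          = 1/(n+1) := by
        rw [Finset.sum_congr rfl fun k _ => conv k]
        have expand : ∑ k ∈ Finset.range (n+2), ((-1:ℝ)) ^ k * ((n+1).choose k : ℝ)
            = 1 + ∑ k ∈ Finset.range (n+1), ((-1:ℝ)) ^ (k+1) * ((n+1).choose (k+1) : ℝ) := by
          rw [Finset.sum_range_succ']
          simp [add_comm]
        have sum1 : ∑ k ∈ Finset.range (n+1), ((-1:ℝ)) ^ k * ((n+1).choose (k+1) : ℝ) = 1 := by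
          have : ∑ k ∈ Finset.range (n+1), ((-1:ℝ)) ^ (k+1) * ((n+1).choose (k+1) : ℝ) = -1 := by
            rw [expand] at alt; linarith
          have neg : ∑ k ∈ Finset.range (n+1), ((-1:ℝ)) ^ (k+1) * ((n+1).choose (k+1) : ℝ)
              = - ∑ k ∈ Finset.range (n+1), ((-1:ℝ)) ^ k * ((n+1).choose (k+1) : ℝ) := by
            rw [← Finset.sum_neg_distrib]
            refine Finset.sum_congr rfl fun k _ => ?_
            ring
          rw [neg] at this; linarith
        rw [← Finset.sum_div, sum1]
      rw [split, drop, first]; ring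
    rw [key, ih, Finset.sum_range_succ]
-- aux regroup lemma
lemma tsum_pair_antidiag {F : ℕ × ℕ → ℝ} (h : Summable F) :
    ∑' p : ℕ × ℕ, F p = ∑' n : ℕ, ∑ kl ∈ Finset.HasAntidiagonal.antidiagonal n, F kl := by
  conv_rhs => congr; ext; rw [← Finset.sum_finset_coe, ← tsum_fintype (L := .unconditional _)]
  rw [← Finset.HasAntidiagonal.sigmaAntidiagonalEquivProd.tsum_eq F]
  exact Summable.tsum_sigma' (fun n ↦ (hasSum_fintype _).summable)
    (Finset.HasAntidiagonal.sigmaAntidiagonalEquivProd.summable_iff.mpr h)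

lemma summable_F {w : ℝ} (hw : 0 < w) :
    Summable (fun p : ℕ × ℕ => w ^ (p.2 + p.1 + 1) / (((p.1:ℝ) + 1) * ((p.2 + p.1 + 1).factorial : ℝ))) := by
  have hG : Summable (fun p : ℕ × ℕ => (w * (w ^ p.1 / (p.1.factorial : ℝ))) * (w ^ p.2 / (p.2.factorial : ℝ))) := by
    apply Summable.mul_of_nonneg ((Real.summable_pow_div_factorial w).mul_left w)
      (Real.summable_pow_div_factorial w)
    · intro j; positivity
    · intro ℓ; positivity
  refine hG.of_nonneg_of_le (fun p => by positivity) fun p => ?_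
  obtain ⟨j, ℓ⟩ := p
  simp only
  have hfac : ((j.factorial : ℝ) * (ℓ.factorial : ℝ)) ≤ ((j:ℝ)+1) * ((ℓ + j + 1).factorial : ℝ) := by
    have h1 : j.factorial * ℓ.factorial ≤ (j + ℓ).factorial :=
      Nat.le_of_dvd (Nat.factorial_pos _) (Nat.factorial_mul_factorial_dvd_factorial_add j ℓ)
    have h2 : (j + ℓ).factorial ≤ (ℓ + j + 1).factorial :=
      Nat.factorial_le (by omega)
    have : (j.factorial * ℓ.factorial : ℝ) ≤ ((ℓ + j + 1).factorial : ℝ) := by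
      exact_mod_cast le_trans h1 h2
    nlinarith [this, (by positivity : (0:ℝ) < ((ℓ + j + 1).factorial : ℝ)), (by positivity : (0:ℝ) ≤ (j:ℝ))]
  calc w ^ (ℓ + j + 1) / (((j:ℝ)+1) * ((ℓ + j + 1).factorial : ℝ))
      ≤ w ^ (ℓ + j + 1) / ((j.factorial : ℝ) * (ℓ.factorial : ℝ)) := by
        apply div_le_div_of_nonneg_left (by positivity) (by positivity) hfac
    _ = (w * (w ^ j / (j.factorial : ℝ))) * (w ^ ℓ / (ℓ.factorial : ℝ)) := by
        rw [pow_add, pow_add, pow_one]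
        field_simp
noncomputable def aseq (w : ℝ) (k : ℕ) : ℝ := (-1:ℝ) ^ (k+1) * w ^ k / ((k:ℝ) * (k.factorial : ℝ))

lemma aseq_zero (w : ℝ) : aseq w 0 = 0 := by simp [aseq]

lemma summable_norm_aseq {w : ℝ} (hw : 0 < w) : Summable fun k => ‖aseq w k‖ := by
  refine (Real.summable_pow_div_factorial w).of_nonneg_of_le (fun k => norm_nonneg _) fun k => ?_
  match k with
  | 0 =>
    rw [aseq]
    norm_num
  | (k+1) =>
    have h1 : ‖aseq w (k+1)‖ = w ^ (k+1) / (((k:ℝ)+1) * ((k+1).factorial : ℝ)) := by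
      rw [aseq, norm_div, norm_mul, norm_pow, norm_neg, norm_one, one_pow, one_mul,
        Real.norm_eq_abs, abs_pow, abs_of_pos hw, Real.norm_eq_abs]
      rw [show ((((k+1):ℕ)):ℝ) * (((k+1).factorial : ℕ):ℝ) = ((k:ℝ)+1) * ((k+1).factorial : ℝ) by push_cast; ring]
      rw [abs_of_nonneg (by positivity : (0:ℝ) ≤ ((k:ℝ)+1) * ((k+1).factorial : ℝ))]
    rw [h1]
    apply div_le_div_of_nonneg_left (by positivity) (by positivity)
    nlinarith [(by positivity : (0:ℝ) < ((k+1).factorial : ℝ)), (by positivity : (0:ℝ) ≤ (k:ℝ))]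

lemma key_sum {w : ℝ} (hw : 0 < w) :
    ∑' p : ℕ × ℕ, (fun p : ℕ × ℕ => w ^ (p.2 + p.1 + 1) / (((p.1:ℝ) + 1) * ((p.2 + p.1 + 1).factorial : ℝ))) p
      = Real.exp w * Ein w := by
  set F : ℕ × ℕ → ℝ := fun p => w ^ (p.2 + p.1 + 1) / (((p.1:ℝ) + 1) * ((p.2 + p.1 + 1).factorial : ℝ)) with hFdef
  have hF : Summable F := summable_F hw
  set f : ℕ → ℝ := fun i => w ^ i / (i.factorial : ℝ) with hfdef
  have hsumf : Summable fun i => ‖f i‖ := by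
    refine (Real.summable_pow_div_factorial w).congr fun i => ?_
    rw [hfdef]
    simp only [norm_div, Real.norm_eq_abs, abs_pow, abs_of_pos hw,
      abs_of_nonneg (by positivity : (0:ℝ) ≤ (i.factorial : ℝ))]
  have hexpw : ∑' i, f i = Real.exp w := by
    rw [hfdef, Real.exp_eq_exp_ℝ, NormedSpace.exp_eq_tsum_div]
  have hEa : ∑' k, aseq w k = Ein w := by
    rw [Summable.tsum_eq_zero_add (summable_norm_aseq hw).of_norm, aseq_zero, zero_add, Ein_series hw]
    refine tsum_congr fun n => ?_
    rw [aseq]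
    push_cast
    ring
  set R : ℕ → ℝ := fun n => ∑ kl ∈ Finset.HasAntidiagonal.antidiagonal n, f kl.1 * aseq w kl.2 with hRdef
  have hcauchy : Real.exp w * Ein w = ∑' n, R n := by
    rw [← hexpw, ← hEa, hRdef]
    exact tsum_mul_tsum_eq_tsum_sum_antidiagonal_of_summable_norm hsumf (summable_norm_aseq hw)
  have hRsum : Summable R :=
    summable_sum_mul_antidiagonal_of_summable_mul
      (summable_mul_of_summable_norm hsumf (summable_norm_aseq hw))
  have hR0 : R 0 = 0 := by
    rw [hRdef]
    simp [aseq_zero]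
  have hshift : ∑' n, R n = ∑' n, R (n + 1) := by
    rw [Summable.tsum_eq_zero_add hRsum, hR0, zero_add]
  -- the finite identity
  have hkey : ∀ n : ℕ, ∑ kl ∈ Finset.HasAntidiagonal.antidiagonal n, F kl = R (n + 1) := by
    intro n
    have hL : ∑ kl ∈ Finset.HasAntidiagonal.antidiagonal n, F kl
        = ∑ j ∈ Finset.range (n+1), (1:ℝ)/((j:ℝ)+1) * (w ^ (n+1) / ((n+1).factorial : ℝ)) := by
      rw [Finset.Nat.sum_antidiagonal_eq_sum_range_succ_mk F n]
      refine Finset.sum_congr rfl fun j hj => ?_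
      have hjn : j ≤ n := Nat.lt_succ_iff.mp (Finset.mem_range.mp hj)
      have hidx : n - j + j + 1 = n + 1 := by omega
      rw [hFdef]
      simp only
      rw [hidx]
      field_simp
    have hR : R (n+1) = ∑ j ∈ Finset.range (n+1),
        ((-1:ℝ)) ^ j * ((n+1).choose (j+1) : ℝ) / ((j:ℝ)+1) * (w ^ (n+1) / ((n+1).factorial : ℝ)) := by
      rw [hRdef]
      simp only
      rw [Finset.Nat.sum_antidiagonal_eq_sum_range_succ_mk (fun kl => f kl.1 * aseq w kl.2) (n+1)]
      rw [Finset.sum_range_succ]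
      have hlast : f (n+1) * aseq w (n+1-(n+1)) = 0 := by
        rw [Nat.sub_self, aseq_zero, mul_zero]
      rw [hlast, add_zero, ← Finset.sum_range_reflect]
      refine Finset.sum_congr rfl fun j hj => ?_
      have hjn : j ≤ n := Nat.lt_succ_iff.mp (Finset.mem_range.mp hj)
      have e1 : n + 1 - 1 - j = n - j := by omega
      have e2 : n + 1 - (n - j) = j + 1 := by omega
      rw [e1, e2, hfdef, aseq]
      simp only
      have hpow : w ^ (n - j) * w ^ (j+1) = w ^ (n+1) := by
        rw [← pow_add]
        congr 1
        omega
      have hchoose : ((n+1).choose (j+1) : ℝ) * ((j+1).factorial : ℝ) * ((n-j).factorial : ℝ)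
          = ((n+1).factorial : ℝ) := by
        have := Nat.choose_mul_factorial_mul_factorial (by omega : j+1 ≤ n+1)
        have e3 : n + 1 - (j + 1) = n - j := by omega
        rw [e3] at this
        exact_mod_cast congrArg (fun x : ℕ => (x:ℝ)) this
      have hnz1 : ((n-j).factorial : ℝ) ≠ 0 := by positivity
      have hnz2 : ((j+1).factorial : ℝ) ≠ 0 := by positivity
      have hnz3 : ((n+1).factorial : ℝ) ≠ 0 := by positivity
      have hnz4 : ((j:ℝ)+1) ≠ 0 := by positivity
      have hcast : (((j+1):ℕ):ℝ) = (j:ℝ)+1 := by push_cast; ring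
      have hps : ((-1:ℝ)) ^ (j+1+1) = ((-1:ℝ)) ^ j := by
        rw [pow_succ, pow_succ]
        ring
      rw [hcast, hps, div_mul_div_comm, div_mul_div_comm]
      rw [show w ^ (n - j) * (((-1:ℝ)) ^ j * w ^ (j + 1)) = ((-1:ℝ)) ^ j * (w ^ (n - j) * w ^ (j + 1)) from by ring, hpow]
      rw [div_eq_div_iff (by positivity) (by positivity)]
      linear_combination (-(((-1:ℝ)) ^ j * w ^ (n + 1) * ((j:ℝ) + 1))) * hchoose
    rw [hL, hR, ← Finset.sum_mul, ← Finset.sum_mul]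
    congr 1
    rw [← alt_choose_harmonic (n+1)]
  rw [hcauchy, hshift]
  rw [tsum_pair_antidiag hF]
  exact tsum_congr hkey

end Aux

/-- `∑_{k≥2} k·s̃_k = m·Ein(m/z)` (the sum over `k ≥ 2` is reindexed via `k = j + 2`). -/
theorem stmt12 (m z : ℝ) (hm : 0 < m) (hz : 0 < z) :
    ∑' j : ℕ, ((j : ℝ) + 2) * stilde m z (j + 2) = m * Ein (m / z) := by
  set w : ℝ := m / z with hwdef
  have hw : 0 < w := div_pos hm hz
  set F : ℕ × ℕ → ℝ := fun p => w ^ (p.2 + p.1 + 1) / (((p.1:ℝ) + 1) * ((p.2 + p.1 + 1).factorial : ℝ)) with hFdef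
  have hF : Summable F := summable_F hw
  set f : ℕ → ℝ := fun i => w ^ i / (i.factorial : ℝ) with hfdef
  have hsumf : Summable fun i => ‖f i‖ := by
    refine (Real.summable_pow_div_factorial w).congr fun i => ?_
    rw [hfdef]
    simp only [norm_div, Real.norm_eq_abs, abs_pow, abs_of_pos hw,
      abs_of_nonneg (by positivity : (0:ℝ) ≤ (i.factorial : ℝ))]
  have hexpw : ∑' i, f i = Real.exp w := by
    rw [Real.exp_eq_exp_ℝ, NormedSpace.exp_eq_tsum_div]
  have hEa : ∑' k, aseq w k = Ein w := by
    rw [Summable.tsum_eq_zero_add (summable_norm_aseq hw).of_norm, aseq_zero, zero_add, Ein_series hw]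
    refine tsum_congr fun n => ?_
    rw [aseq]
    push_cast
    ring
  -- step 1: termwise rewrite
  have hterm : ∀ j : ℕ, ((j : ℝ) + 2) * stilde m z (j + 2)
      = m * Real.exp (-w) * ∑' ℓ : ℕ, F (j, ℓ) := by
    intro j
    rw [stilde]
    simp only [← hwdef]
    have hidx : ∀ ℓ : ℕ, ℓ + (j + 2 - 1) = ℓ + j + 1 := fun ℓ => by omega
    have hS : (∑' ℓ : ℕ, w ^ (ℓ + (j + 2 - 1)) / ((ℓ + (j + 2 - 1)).factorial : ℝ))
        = ∑' ℓ : ℕ, w ^ (ℓ + j + 1) / ((ℓ + j + 1).factorial : ℝ) := by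
      refine tsum_congr fun ℓ => by rw [hidx ℓ]
    have hFj : (∑' ℓ : ℕ, F (j, ℓ))
        = (∑' ℓ : ℕ, w ^ (ℓ + j + 1) / ((ℓ + j + 1).factorial : ℝ)) * (1 / ((j:ℝ) + 1)) := by
      rw [← tsum_mul_right]
      refine tsum_congr fun ℓ => ?_
      rw [hFdef]
      have : ((j:ℝ) + 1) ≠ 0 := by positivity
      field_simp
    rw [hS, hFj]
    have h1 : ((j:ℝ) + 1) ≠ 0 := by positivity
    have h2 : ((j:ℝ) + 2) ≠ 0 := by positivity
    push_cast
    rw [show ((j:ℝ) + 2) * ((j:ℝ) + 2 - 1) = ((j:ℝ) + 2) * ((j:ℝ) + 1) from by ring]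
    field_simp
  calc ∑' j : ℕ, ((j : ℝ) + 2) * stilde m z (j + 2)
      = ∑' j : ℕ, m * Real.exp (-w) * ∑' ℓ : ℕ, F (j, ℓ) := tsum_congr hterm
    _ = m * Real.exp (-w) * ∑' j : ℕ, ∑' ℓ : ℕ, F (j, ℓ) := tsum_mul_left
    _ = m * Real.exp (-w) * ∑' p : ℕ × ℕ, F p := by
        rw [Summable.tsum_prod' hF fun j => (hF.prod_factor j)]
    _ = m * Real.exp (-w) * (Real.exp w * Ein w) := by rw [key_sum hw]
    _ = m * Ein w := by
        have h : Real.exp (-w) * Real.exp w = 1 := by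
          rw [← Real.exp_add]
          simp
        linear_combination m * Ein w * h
end

section
/- Fix m, z > 0 and for each integer k ≥ 2 define s̃_k := (m/(k(k−1)))·e^{−m/z}·Σ_{ℓ=k−1}^∞ (1/ℓ!)·(m/z)^ℓ. Then Σ_{k≥2} s̃_k = m − z·(1 − e^{−m/z}). -/
set_option maxHeartbeats 1000000

open Finset Filter

/-- `∑_{k≥2} s̃_k = m − z·(1 − e^{−m/z})` (the sum over `k ≥ 2` is reindexed via `k = j + 2`). -/
theorem stmt13 (m z : ℝ) (hm : 0 < m) (hz : 0 < z) :
    ∑' j : ℕ, stilde m z (j + 2) = m - z * (1 - Real.exp (-(m / z))) := by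
  set x : ℝ := m / z with hxdef
  clear_value x
  have hx : 0 < x := hxdef ▸ div_pos hm hz
  have hE : Summable (fun n : ℕ => x ^ n / n.factorial) := Real.summable_pow_div_factorial x
  have hexp : ∑' n : ℕ, x ^ n / n.factorial = Real.exp x := by
    rw [Real.exp_eq_exp_ℝ, NormedSpace.exp_eq_tsum_div]
  set T : ℕ → ℝ := fun j => ∑' n : ℕ, x ^ (n + j) / (n + j).factorial with hTdef
  have hT : ∀ j, T j = Real.exp x - ∑ i ∈ range j, x ^ i / i.factorial := by
    intro j
    have h := Summable.sum_add_tsum_nat_add j hE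
    rw [hexp] at h
    simp only [hTdef]
    linarith
  have hTnonneg : ∀ j, 0 ≤ T j := by
    intro j
    apply tsum_nonneg
    intro n
    positivity
  have hTle : ∀ j, T j ≤ Real.exp x := by
    intro j
    rw [hT]
    have : (0:ℝ) ≤ ∑ i ∈ range j, x ^ i / i.factorial := by positivity
    linarith
  -- closed form of the terms
  have hst : ∀ j : ℕ, stilde m z (j + 2)
      = m / (((j:ℝ) + 2) * ((j:ℝ) + 1)) * Real.exp (-x) * T (j + 1) := by
    intro j
    rw [stilde]
    have h1 : (j + 2 - 1 : ℕ) = j + 1 := rfl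
    rw [h1, ← hxdef]
    have h2 : ((j + 2 : ℕ) : ℝ) = (j:ℝ) + 2 := by push_cast; ring
    rw [h2, hTdef]
    beta_reduce
    congr 1
    ring_nf
  set c : ℕ → ℝ := fun j => m * Real.exp (-x) * T (j + 1) / ((j:ℝ) + 1) with hcdef
  set d : ℕ → ℝ := fun j => m * Real.exp (-x) * x ^ (j + 1) / (j + 2).factorial with hddef
  have hstep : ∀ j : ℕ, T (j + 1) = x ^ (j + 1) / (j + 1).factorial + T (j + 2) := by
    intro j
    have hs : ∑ i ∈ range (j + 2), x ^ i / i.factorial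
        = ∑ i ∈ range (j + 1), x ^ i / i.factorial + x ^ (j + 1) / (j + 1).factorial :=
      Finset.sum_range_succ _ _
    rw [hT, hT, hs]
    ring
  have key : ∀ j : ℕ, stilde m z (j + 2) = (c j - c (j + 1)) - d j := by
    intro j
    have hf1 : ((j + 1).factorial : ℝ) ≠ 0 := by
      exact_mod_cast (Nat.factorial_pos _).ne'
    have hfact : ((j + 2).factorial : ℝ) = ((j:ℝ) + 2) * (j + 1).factorial := by
      have h : (j + 2).factorial = (j + 2) * (j + 1).factorial := rfl
      rw [h]; push_cast; ring
    rw [hst, hcdef, hddef]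
    simp only
    rw [hstep j, hfact]
    have h1 : ((j:ℝ) + 1) ≠ 0 := by positivity
    have h2 : ((j:ℝ) + 2) ≠ 0 := by positivity
    push_cast
    field_simp
    ring
  have hpartial : ∀ N, ∑ j ∈ range N, stilde m z (j + 2)
      = c 0 - c N - ∑ j ∈ range N, d j := by
    intro N
    simp only [key]
    rw [Finset.sum_sub_distrib, Finset.sum_range_sub' c]
  -- summability of the series
  have hsum : Summable (fun j : ℕ => stilde m z (j + 2)) := by
    have hg : Summable (fun j : ℕ => (m * Real.exp (-x) * Real.exp x) * (1 / ((j:ℝ) + 1) ^ 2)) := by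
      apply Summable.mul_left
      have h0 : Summable (fun n : ℕ => 1 / (n : ℝ) ^ 2) := Real.summable_one_div_nat_pow.mpr one_lt_two
      have := (summable_nat_add_iff 1).mpr h0
      apply this.congr
      intro n
      push_cast
      ring
    apply Summable.of_nonneg_of_le _ _ hg
    · intro j
      rw [hst]
      have := hTnonneg (j + 1)
      positivity
    · intro j
      rw [hst]
      calc m / (((j:ℝ) + 2) * ((j:ℝ) + 1)) * Real.exp (-x) * T (j + 1)
          ≤ m / (((j:ℝ) + 1) * ((j:ℝ) + 1)) * Real.exp (-x) * Real.exp x := by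
            have hj : (0:ℝ) ≤ (j:ℝ) := Nat.cast_nonneg j
            have h1 : m / (((j:ℝ) + 2) * ((j:ℝ) + 1)) ≤ m / (((j:ℝ) + 1) * ((j:ℝ) + 1)) := by
              apply div_le_div_of_nonneg_left hm.le (by positivity)
              nlinarith
            have h2 : (0:ℝ) ≤ m / (((j:ℝ) + 2) * ((j:ℝ) + 1)) * Real.exp (-x) := by positivity
            calc m / (((j:ℝ) + 2) * ((j:ℝ) + 1)) * Real.exp (-x) * T (j + 1)
                ≤ m / (((j:ℝ) + 2) * ((j:ℝ) + 1)) * Real.exp (-x) * Real.exp x :=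
                  mul_le_mul_of_nonneg_left (hTle _) h2
              _ ≤ m / (((j:ℝ) + 1) * ((j:ℝ) + 1)) * Real.exp (-x) * Real.exp x := by
                  have h3 := mul_le_mul_of_nonneg_right h1 (Real.exp_pos (-x)).le
                  exact mul_le_mul_of_nonneg_right h3 (Real.exp_pos x).le
        _ = m * Real.exp (-x) * Real.exp x * (1 / ((j:ℝ) + 1) ^ 2) := by
            ring
  -- limit of c
  have hc0 : Tendsto c atTop (nhds 0) := by
    apply squeeze_zero (g := fun N : ℕ => m * Real.exp (-x) * Real.exp x * (1 / ((N:ℝ) + 1)))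
    · intro N
      rw [hcdef]
      have := hTnonneg (N + 1)
      positivity
    · intro N
      rw [hcdef]
      simp only
      rw [div_le_iff₀ (by positivity : (0:ℝ) < (N:ℝ) + 1)]
      calc m * Real.exp (-x) * T (N + 1)
          ≤ m * Real.exp (-x) * Real.exp x := by
            have h1 : (0:ℝ) ≤ m * Real.exp (-x) := by positivity
            exact mul_le_mul_of_nonneg_left (hTle _) h1
        _ = m * Real.exp (-x) * Real.exp x * (1 / ((N:ℝ) + 1)) * ((N:ℝ) + 1) := by
            field_simp
    · have h := tendsto_one_div_add_atTop_nhds_zero_nat.const_mul (m * Real.exp (-x) * Real.exp x)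
      simpa using h
  -- sum of d
  have h2sum : Summable (fun j : ℕ => x ^ (j + 2) / (j + 2).factorial) :=
    (summable_nat_add_iff 2).mpr hE
  have hdeq : d = fun j : ℕ => (m * Real.exp (-x) / x) * (x ^ (j + 2) / (j + 2).factorial) := by
    funext j
    rw [hddef]
    simp only
    field_simp
    ring
  have hdsum : HasSum d (m * Real.exp (-x) / x * T 2) := by
    have h := h2sum.hasSum.mul_left (m * Real.exp (-x) / x)
    have hT2' : T 2 = ∑' (n : ℕ), x ^ (n + 2) / (n + 2).factorial := rfl
    rw [hT2', hdeq]
    exact h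
  have hmain : Tendsto (fun N => ∑ j ∈ range N, stilde m z (j + 2)) atTop
      (nhds (c 0 - 0 - m * Real.exp (-x) / x * T 2)) := by
    simp only [hpartial]
    exact (tendsto_const_nhds.sub hc0).sub hdsum.tendsto_sum_nat
  have hval : ∑' j : ℕ, stilde m z (j + 2) = c 0 - 0 - m * Real.exp (-x) / x * T 2 :=
    tendsto_nhds_unique hsum.hasSum.tendsto_sum_nat hmain
  rw [hval]
  have hT1 : T 1 = Real.exp x - 1 := by
    rw [hT]; norm_num
  have hT2 : T 2 = Real.exp x - (1 + x) := by
    rw [hT]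
    rw [Finset.sum_range_succ, Finset.sum_range_one]
    norm_num
  rw [hcdef]
  simp only [hT1, hT2]
  have hxz : x * z = m := by rw [hxdef]; field_simp
  rw [Real.exp_neg]
  have hex : Real.exp x ≠ 0 := Real.exp_ne_zero x
  field_simp
  linear_combination (Real.exp x - 1) * hxz
end
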